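/- arXiv:1402.2794 — 7 statements merged into one kernel-verified Lean document; each statement's English description precedes it below -/
import Mathlib

section
/- Let F be a finite field with q elements and f(x) ∈ F[x] an irreducible monic polynomial of degree n. Then the number of n×n matrices over F whose characteristic polynomial equals f is ∏_{i=1}^{n-1} (q^n - q^i). -/
open Polynomial AdjoinRoot LinearMap

theorem aux_toMatrix_conj {F K V : Type*} [Field F] [AddCommGroup K] [Module F K]
    [AddCommGroup V] [Module F V] {ι : Type*} [Fintype ι] [DecidableEq ι]
    (b : Module.Basis ι F K) (ψ : K ≃ₗ[F] V) (T : K →ₗ[F] K) :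
    LinearMap.toMatrix (b.map ψ) (b.map ψ)
      (ψ.toLinearMap ∘ₗ T ∘ₗ ψ.symm.toLinearMap) = LinearMap.toMatrix b b T := by
  ext i j
  simp [LinearMap.toMatrix_apply, Module.Basis.map_apply, Module.Basis.map_repr]

theorem aux_charpoly_conj {F : Type*} [Field F] {f : Polynomial F}
    (hmonic : f.Monic) {n : ℕ} (hdeg : f.natDegree = n)
    (ψ : AdjoinRoot f ≃ₗ[F] (Fin n → F)) :
    (LinearMap.toMatrix' (ψ.toLinearMap ∘ₗ (LinearMap.mulLeft F (root f)) ∘ₗ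
      ψ.symm.toLinearMap)).charpoly = f := by
  set pb := AdjoinRoot.powerBasis (hmonic.ne_zero)
  haveI := Module.Free.of_basis pb.basis
  haveI := Module.Finite.of_basis pb.basis
  set T := LinearMap.mulLeft F (root f) with hT
  have h3 : LinearMap.toMatrix pb.basis pb.basis T = Algebra.leftMulMatrix pb.basis (root f) := by
    ext i j
    simp [LinearMap.toMatrix_apply, Algebra.leftMulMatrix_eq_repr_mul, hT]
  calc (LinearMap.toMatrix' (ψ.toLinearMap ∘ₗ T ∘ₗ ψ.symm.toLinearMap)).charpoly
      = (ψ.toLinearMap ∘ₗ T ∘ₗ ψ.symm.toLinearMap).charpoly := by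
        rw [← LinearMap.toMatrix_eq_toMatrix', LinearMap.charpoly_toMatrix]
    _ = (LinearMap.toMatrix (pb.basis.map ψ) (pb.basis.map ψ)
          (ψ.toLinearMap ∘ₗ T ∘ₗ ψ.symm.toLinearMap)).charpoly := by
        rw [LinearMap.charpoly_toMatrix]
    _ = (Algebra.leftMulMatrix pb.basis (root f)).charpoly := by
        rw [aux_toMatrix_conj, h3]
    _ = f := by
        have : root f = pb.gen := (AdjoinRoot.powerBasis_gen hmonic.ne_zero).symm
        rw [this, charpoly_leftMulMatrix, ← this,
          AdjoinRoot.minpoly_root hmonic.ne_zero, hmonic.leadingCoeff]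
        simp

theorem aux_surj {F : Type*} [Field F] {f : Polynomial F}
    (hmonic : f.Monic) (hirr : Irreducible f) {n : ℕ} (hdeg : f.natDegree = n)
    (M : Matrix (Fin n) (Fin n) F) (hM : M.charpoly = f) :
    ∃ ψ : AdjoinRoot f ≃ₗ[F] (Fin n → F),
      LinearMap.toMatrix' (ψ.toLinearMap ∘ₗ (LinearMap.mulLeft F (root f)) ∘ₗ
        ψ.symm.toLinearMap) = M := by
  haveI := Fact.mk hirr
  have hT : Polynomial.aeval (Matrix.toLinAlgEquiv' M : Module.End F (Fin n → F)) f = 0 := by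
    rw [← hM, Polynomial.aeval_algEquiv]
    simp [Matrix.aeval_self_charpoly]
  have hI : ∀ g ∈ Ideal.span {f}, Polynomial.aeval
      (Matrix.toLinAlgEquiv' M : Module.End F (Fin n → F)) g = 0 := by
    intro g hg
    obtain ⟨c, rfl⟩ := Ideal.mem_span_singleton.mp hg
    rw [map_mul, hT, zero_mul]
  let φ : AdjoinRoot f →ₐ[F] Module.End F (Fin n → F) :=
    Ideal.Quotient.liftₐ (Ideal.span {f})
      (Polynomial.aeval (Matrix.toLinAlgEquiv' M : Module.End F (Fin n → F))) hI
  have hroot : φ (root f) = Matrix.toLinAlgEquiv' M := by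
    show Ideal.Quotient.liftₐ (Ideal.span {f}) _ hI (Ideal.Quotient.mk (Ideal.span {f}) X) = _
    change Polynomial.aeval (Matrix.toLinAlgEquiv' M : Module.End F (Fin n → F)) X = _
    simp
  letI : Module (AdjoinRoot f) (Fin n → F) := Module.compHom _ φ.toRingHom
  have hsmul : ∀ (k : AdjoinRoot f) (v : Fin n → F), k • v = φ k v := fun k v => rfl
  letI : IsScalarTower F (AdjoinRoot f) (Fin n → F) := ⟨fun c k v => by
    show φ (c • k) v = c • (φ k v)
    rw [map_smul]; rfl⟩
  set pb := AdjoinRoot.powerBasis hmonic.ne_zero with hpb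
  haveI := Module.Free.of_basis pb.basis
  haveI := Module.Finite.of_basis pb.basis
  have hn : 0 < n := hdeg ▸ hirr.natDegree_pos
  have hrk : Module.finrank F (AdjoinRoot f) = n := by
    rw [pb.finrank, hpb, AdjoinRoot.powerBasis_dim, hdeg]
  have hrV : Module.finrank F (Fin n → F) = n := by
    simp [Module.finrank_fintype_fun_eq_card]
  have hmul : Module.finrank F (AdjoinRoot f) * Module.finrank (AdjoinRoot f) (Fin n → F)
      = Module.finrank F (Fin n → F) :=
    Module.finrank_mul_finrank F (AdjoinRoot f) (Fin n → F)
  have h1 : Module.finrank (AdjoinRoot f) (Fin n → F) = 1 := by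
    rw [hrk, hrV] at hmul
    exact Nat.eq_of_mul_eq_mul_left hn (by rw [hmul, mul_one])
  haveI : Module.Finite (AdjoinRoot f) (Fin n → F) :=
    Module.Finite.of_restrictScalars_finite F (AdjoinRoot f) (Fin n → F)
  haveI : Module.Free (AdjoinRoot f) (Fin n → F) := Module.Free.of_divisionRing _ _
  obtain ⟨e⟩ := FiniteDimensional.nonempty_linearEquiv_of_finrank_eq
    (R := AdjoinRoot f) (M := AdjoinRoot f) (M' := Fin n → F)
    (by rw [Module.finrank_self, h1])
  refine ⟨e.restrictScalars F, ?_⟩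
  have key : (e.restrictScalars F).toLinearMap ∘ₗ (LinearMap.mulLeft F (root f)) ∘ₗ
      (e.restrictScalars F).symm.toLinearMap = Matrix.toLin' M := by
    refine LinearMap.ext fun v => ?_
    show e (root f * (e.symm v)) = Matrix.toLin' M v
    calc e (root f * (e.symm v)) = e ((root f) • (e.symm v)) := rfl
      _ = (root f) • e (e.symm v) := map_smul e _ _
      _ = φ (root f) v := by rw [e.apply_symm_apply]; rfl
      _ = Matrix.toLin' M v := by rw [hroot]; rfl
  rw [key, LinearMap.toMatrix'_toLin']

noncomputable def mulUnitEquiv {F : Type*} [Field F] {f : Polynomial F}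
    (u : (AdjoinRoot f)ˣ) : AdjoinRoot f ≃ₗ[F] AdjoinRoot f :=
  LinearEquiv.ofLinear (LinearMap.mulLeft F (u : AdjoinRoot f))
    (LinearMap.mulLeft F ((u⁻¹ : (AdjoinRoot f)ˣ) : AdjoinRoot f))
    (by ext k; simp [← mul_assoc, ← Units.val_mul])
    (by ext k; simp [← mul_assoc, ← Units.val_mul])

@[simp] lemma mulUnitEquiv_apply {F : Type*} [Field F] {f : Polynomial F}
    (u : (AdjoinRoot f)ˣ) (k : AdjoinRoot f) : mulUnitEquiv u k = u * k := rfl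

theorem aux_mem_fiber {F : Type*} [Field F] {f : Polynomial F} {n : ℕ}
    (ψ₀ : AdjoinRoot f ≃ₗ[F] (Fin n → F)) (u : (AdjoinRoot f)ˣ) :
    LinearMap.toMatrix' (((mulUnitEquiv u).trans ψ₀).toLinearMap ∘ₗ
        (LinearMap.mulLeft F (root f)) ∘ₗ ((mulUnitEquiv u).trans ψ₀).symm.toLinearMap) =
    LinearMap.toMatrix' (ψ₀.toLinearMap ∘ₗ (LinearMap.mulLeft F (root f)) ∘ₗ
        ψ₀.symm.toLinearMap) := by
  congr 1
  refine LinearMap.ext fun v => ?_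
  show ψ₀ (u * (root f * ((mulUnitEquiv u).symm (ψ₀.symm v)))) = ψ₀ (root f * ψ₀.symm v)
  have : (u : AdjoinRoot f) * (root f * ((mulUnitEquiv u).symm (ψ₀.symm v)))
      = root f * (u * ((mulUnitEquiv u).symm (ψ₀.symm v))) := by ring
  rw [this]
  congr 1
  have h2 : (mulUnitEquiv u) ((mulUnitEquiv u).symm (ψ₀.symm v)) = ψ₀.symm v :=
    (mulUnitEquiv u).apply_symm_apply _
  rw [mulUnitEquiv_apply] at h2
  rw [h2]

theorem aux_comm {F : Type*} [Field F] {f : Polynomial F} {n : ℕ}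
    (ψ₀ ψ : AdjoinRoot f ≃ₗ[F] (Fin n → F))
    (h : LinearMap.toMatrix' (ψ.toLinearMap ∘ₗ (LinearMap.mulLeft F (root f)) ∘ₗ
        ψ.symm.toLinearMap) =
      LinearMap.toMatrix' (ψ₀.toLinearMap ∘ₗ (LinearMap.mulLeft F (root f)) ∘ₗ
        ψ₀.symm.toLinearMap)) (k : AdjoinRoot f) :
    ψ₀.symm (ψ (root f * k)) = root f * ψ₀.symm (ψ k) := by
  have h' := LinearMap.toMatrix'.injective h
  have h2 := congrFun (congrArg (fun (T : (Fin n → F) →ₗ[F] (Fin n → F)) => (T : _ → _)) h') (ψ k)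
  simp only [LinearMap.coe_comp, Function.comp_apply, LinearEquiv.coe_coe,
    LinearMap.mulLeft_apply, LinearEquiv.symm_apply_apply] at h2
  rw [h2, LinearEquiv.symm_apply_apply]

theorem aux_scalar {F : Type*} [Field F] {f : Polynomial F} {n : ℕ}
    (ψ₀ ψ : AdjoinRoot f ≃ₗ[F] (Fin n → F))
    (h : LinearMap.toMatrix' (ψ.toLinearMap ∘ₗ (LinearMap.mulLeft F (root f)) ∘ₗ
        ψ.symm.toLinearMap) =
      LinearMap.toMatrix' (ψ₀.toLinearMap ∘ₗ (LinearMap.mulLeft F (root f)) ∘ₗ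
        ψ₀.symm.toLinearMap)) (x k : AdjoinRoot f) :
    ψ₀.symm (ψ (x * k)) = x * ψ₀.symm (ψ k) := by
  induction x using AdjoinRoot.induction_on with
  | ih p =>
    induction p using Polynomial.induction_on generalizing k with
    | C a =>
      rw [show ((AdjoinRoot.mk f) (C a)) * k = a • k by
          rw [AdjoinRoot.mk_C]; exact (Algebra.smul_def a k).symm,
        show ((AdjoinRoot.mk f) (C a)) * (ψ₀.symm (ψ k)) = a • (ψ₀.symm (ψ k)) by
          rw [AdjoinRoot.mk_C]; exact (Algebra.smul_def a _).symm,
        map_smul, map_smul]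
    | add p q hp hq =>
      rw [map_add, add_mul, map_add, map_add, hp, hq, add_mul]
    | monomial m a ih =>
      have hx : AdjoinRoot.mk f (C a * X ^ (m + 1)) =
          AdjoinRoot.mk f (C a * X ^ m) * root f := by
        rw [pow_succ, ← mul_assoc, map_mul, AdjoinRoot.mk_X]
      rw [hx, mul_assoc, ih, aux_comm ψ₀ ψ h, ← mul_assoc]

theorem aux_fiber {F : Type*} [Field F] {f : Polynomial F}
    (hirr : Irreducible f) {n : ℕ}
    (ψ₀ : AdjoinRoot f ≃ₗ[F] (Fin n → F)) :
    Function.Bijective (fun u : (AdjoinRoot f)ˣ =>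
      (⟨(mulUnitEquiv u).trans ψ₀, aux_mem_fiber ψ₀ u⟩ :
        {ψ : AdjoinRoot f ≃ₗ[F] (Fin n → F) //
          LinearMap.toMatrix' (ψ.toLinearMap ∘ₗ (LinearMap.mulLeft F (root f)) ∘ₗ
            ψ.symm.toLinearMap) =
          LinearMap.toMatrix' (ψ₀.toLinearMap ∘ₗ (LinearMap.mulLeft F (root f)) ∘ₗ
            ψ₀.symm.toLinearMap)})) := by
  haveI := Fact.mk hirr
  constructor
  · intro u u' huu'
    have h1 := congrArg (fun z => z.1 1) huu'
    simp only [LinearEquiv.trans_apply, mulUnitEquiv_apply, mul_one] at h1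
    exact Units.ext (ψ₀.injective h1)
  · rintro ⟨ψ, hψ⟩
    set c := ψ₀.symm (ψ 1) with hc
    have hscal : ∀ k, ψ₀.symm (ψ k) = k * c := by
      intro k
      rw [hc, ← aux_scalar ψ₀ ψ hψ k 1, mul_one]
    have hcne : c ≠ 0 := by
      intro h0
      have : ψ₀.symm (ψ 1) = ψ₀.symm (ψ 0) := by
        rw [map_zero, map_zero, ← hc, h0]
      exact one_ne_zero (ψ₀.symm.injective.comp ψ.injective (by exact this))
    refine ⟨Units.mk0 c hcne, ?_⟩
    ext1
    apply LinearEquiv.toLinearMap_injective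
    refine LinearMap.ext fun k => ?_
    show ψ₀ ((Units.mk0 c hcne : AdjoinRoot f) * k) = ψ k
    rw [Units.val_mk0, mul_comm, ← hscal k, ψ₀.apply_symm_apply]

theorem aux_fiber' {F : Type*} [Field F] {f : Polynomial F}
    (hirr : Irreducible f) {n : ℕ}
    (ψ₀ : AdjoinRoot f ≃ₗ[F] (Fin n → F)) :
    ∀ (M : Matrix (Fin n) (Fin n) F),
      (LinearMap.toMatrix' (ψ₀.toLinearMap ∘ₗ (LinearMap.mulLeft F (root f)) ∘ₗ
        ψ₀.symm.toLinearMap) = M) →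
    Nonempty ((AdjoinRoot f)ˣ ≃
      {ψ : AdjoinRoot f ≃ₗ[F] (Fin n → F) //
        LinearMap.toMatrix' (ψ.toLinearMap ∘ₗ (LinearMap.mulLeft F (root f)) ∘ₗ
          ψ.symm.toLinearMap) = M}) := by
  rintro M rfl
  exact ⟨Equiv.ofBijective _ (aux_fiber hirr ψ₀)⟩

theorem count_matrices_with_irreducible_charpoly
    (F : Type*) [Field F] [Fintype F] (q n : ℕ) (hq : Fintype.card F = q)
    (f : Polynomial F) (hmonic : f.Monic) (hirr : Irreducible f)
    (hdeg : f.natDegree = n) :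
    Nat.card {M : Matrix (Fin n) (Fin n) F // M.charpoly = f} =
      ∏ i ∈ Finset.Ico 1 n, (q ^ n - q ^ i) := by
  classical
  haveI := Fact.mk hirr
  have hn : 0 < n := hdeg ▸ hirr.natDegree_pos
  set pb := AdjoinRoot.powerBasis hmonic.ne_zero with hpb
  haveI := Module.Free.of_basis pb.basis
  haveI := Module.Finite.of_basis pb.basis
  haveI : Finite (AdjoinRoot f) := Module.finite_of_finite F
  letI : Fintype (AdjoinRoot f) := Fintype.ofFinite _
  have hrk : Module.finrank F (AdjoinRoot f) = n := by
    rw [pb.finrank, hpb, AdjoinRoot.powerBasis_dim, hdeg]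
  have hrV : Module.finrank F (Fin n → F) = n := by
    simp [Module.finrank_fintype_fun_eq_card]
  -- card of units
  have hq2 : 1 < q := hq ▸ Fintype.one_lt_card
  have hcardK : Fintype.card (AdjoinRoot f) = q ^ n := by
    rw [Module.card_eq_pow_finrank (K := F) (V := AdjoinRoot f), hrk, hq]
  have hunits : Nat.card (AdjoinRoot f)ˣ = q ^ n - 1 := by
    rw [Nat.card_eq_fintype_card, Fintype.card_units, hcardK]
  -- the fibration
  set A := (AdjoinRoot f ≃ₗ[F] (Fin n → F)) with hA
  haveI : Finite A := by
    exact Finite.of_injective (fun ψ => (ψ : AdjoinRoot f → (Fin n → F)))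
      DFunLike.coe_injective
  set S := {M : Matrix (Fin n) (Fin n) F // M.charpoly = f} with hS
  set Φ : A → S := fun ψ => ⟨LinearMap.toMatrix' (ψ.toLinearMap ∘ₗ
    (LinearMap.mulLeft F (root f)) ∘ₗ ψ.symm.toLinearMap),
    aux_charpoly_conj hmonic hdeg ψ⟩ with hΦ
  have hfib : ∀ M : S, Nat.card {ψ : A // Φ ψ = M} = q ^ n - 1 := by
    intro M
    obtain ⟨ψ₀, hψ₀⟩ := aux_surj hmonic hirr hdeg M.1 M.2
    obtain ⟨e⟩ := aux_fiber' hirr ψ₀ M.1 hψ₀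
    rw [← hunits]
    refine Nat.card_congr ?_
    exact ((e.trans (Equiv.subtypeEquivRight (fun ψ => by
      rw [hΦ]
      constructor
      · intro h; exact Subtype.ext h
      · intro h; exact congrArg Subtype.val h)))).symm
  have hsplit : Nat.card A = Nat.card S * (q ^ n - 1) := by
    rw [Nat.card_congr (Equiv.sigmaFiberEquiv Φ).symm]
    letI : Fintype S := Fintype.ofFinite _
    letI : Fintype A := Fintype.ofFinite _
    rw [Nat.card_eq_fintype_card, Fintype.card_sigma]
    rw [Nat.card_eq_fintype_card]
    rw [Finset.sum_congr rfl (fun M _ => by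
      rw [← Nat.card_eq_fintype_card, hfib M])]
    rw [Finset.sum_const, Finset.card_univ, smul_eq_mul]
  -- card of A equals card of GL
  have hGL : Nat.card A = ∏ i : Fin n, (q ^ n - q ^ (i : ℕ)) := by
    obtain ⟨e₀⟩ := FiniteDimensional.nonempty_linearEquiv_of_finrank_eq
      (R := F) (M := AdjoinRoot f) (M' := Fin n → F) (by rw [hrk, hrV])
    have E1 : A ≃ ((Fin n → F) ≃ₗ[F] (Fin n → F)) :=
      { toFun := fun ψ => e₀.symm.trans ψ
        invFun := fun g => e₀.trans g
        left_inv := fun ψ => by ext k; simp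
        right_inv := fun g => by ext v; simp }
    have E2 : (GL (Fin n) F) ≃ ((Fin n → F) ≃ₗ[F] (Fin n → F)) :=
      ((Matrix.GeneralLinearGroup.toLin).trans
        (LinearMap.GeneralLinearGroup.generalLinearEquiv F (Fin n → F))).toEquiv
    rw [Nat.card_congr (E1.trans E2.symm), Matrix.card_GL_field, hq]
  -- finish
  have hpos : 0 < q ^ n - 1 := by
    have : 1 < q ^ n := Nat.one_lt_pow hn.ne' hq2
    omega
  have : Nat.card S * (q ^ n - 1) = (q ^ n - 1) * ∏ i ∈ Finset.Ico 1 n, (q ^ n - q ^ i) := by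
    rw [← hsplit, hGL, Fin.prod_univ_eq_prod_range (fun j => q ^ n - q ^ j) n,
      Finset.range_eq_Ico, Finset.prod_eq_prod_Ico_succ_bot hn, pow_zero]
  exact Nat.eq_of_mul_eq_mul_right hpos (by rw [this, mul_comm])
end

section
/- If M ∈ M_n(F_q) has irreducible characteristic polynomial, then the centralizer of M in M_n(F_q) has exactly q^n elements. -/
open Polynomial Matrix Module

set_option maxHeartbeats 1000000 in
set_option synthInstance.maxHeartbeats 200000 in
theorem card_centralizer_of_irreducible_charpoly
    (F : Type*) [Field F] [Fintype F] (q n : ℕ) (hq : Fintype.card F = q)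
    (M : Matrix (Fin n) (Fin n) F) (h : Irreducible M.charpoly) :
    Nat.card {A : Matrix (Fin n) (Fin n) F // A * M = M * A} = q ^ n := by
  haveI : Fact (Irreducible M.charpoly) := ⟨h⟩
  have hdeg : M.charpoly.natDegree = n := by simpa using M.charpoly_natDegree_eq_dim
  have hn : n ≠ 0 := by
    rintro rfl
    exact h.not_isUnit ((M.charpoly_monic.natDegree_eq_zero.mp hdeg) ▸ isUnit_one)
  set K := AdjoinRoot M.charpoly with hKdef
  let φ : K →+* Matrix (Fin n) (Fin n) F :=
    Ideal.Quotient.lift _ (aeval M).toRingHom (by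
      intro a ha
      rw [Ideal.mem_span_singleton] at ha
      obtain ⟨c, rfl⟩ := ha
      simp [Matrix.aeval_self_charpoly])
  have hmk : ∀ p : F[X], φ (AdjoinRoot.mk M.charpoly p) = aeval M p := fun p => rfl
  have hcomm : ∀ (A : Matrix (Fin n) (Fin n) F), A * M = M * A →
      ∀ k : K, A * φ k = φ k * A := by
    intro A hA k
    obtain ⟨p, rfl⟩ := AdjoinRoot.mk_surjective k
    rw [hmk]
    have hmem : aeval M p ∈ Algebra.adjoin F ({M} : Set (Matrix (Fin n) (Fin n) F)) := by
      rw [Algebra.adjoin_singleton_eq_range_aeval]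
      exact ⟨p, rfl⟩
    exact Algebra.commute_of_mem_adjoin_singleton_of_commute hmem hA
  let ψ : K →+* Module.End F (Fin n → F) :=
    ((Matrix.toLinAlgEquiv' (R := F) (n := Fin n)).toAlgHom.toRingHom).comp φ
  letI : Module K (Fin n → F) := Module.compHom _ ψ
  have hsmul : ∀ (k : K) (v : Fin n → F), k • v = (φ k).mulVec v := fun k v => rfl
  letI : IsScalarTower F K (Fin n → F) := by
    constructor
    intro x k v
    rw [hsmul, hsmul, Algebra.smul_def, _root_.map_mul]
    have : φ (algebraMap F K x) = Matrix.scalar (Fin n) x := by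
      rw [show algebraMap F K x = AdjoinRoot.mk M.charpoly (C x) from rfl, hmk, aeval_C]
      rfl
    rw [this, Matrix.scalar_apply, ← Matrix.smul_eq_diagonal_mul, Matrix.smul_mulVec]
  -- the equivalence with K-linear endomorphisms
  have hroot : φ (AdjoinRoot.root M.charpoly) = M := by
    rw [show AdjoinRoot.root M.charpoly = AdjoinRoot.mk M.charpoly X from rfl, hmk, aeval_X]
  let e : {A : Matrix (Fin n) (Fin n) F // A * M = M * A} ≃
      ((Fin n → F) →ₗ[K] (Fin n → F)) :=
    { toFun := fun A =>
        { toFun := fun v => A.1.mulVec v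
          map_add' := fun u v => Matrix.mulVec_add _ _ _
          map_smul' := fun k v => by
            simp only [RingHom.id_apply]
            rw [hsmul, hsmul, Matrix.mulVec_mulVec, Matrix.mulVec_mulVec, hcomm A.1 A.2 k] }
      invFun := fun f =>
        ⟨LinearMap.toMatrix' (f.restrictScalars F), by
          apply (Matrix.toLinAlgEquiv' (R := F) (n := Fin n)).injective
          apply LinearMap.ext
          intro v
          show (LinearMap.toMatrix' (f.restrictScalars F) * M).mulVec v
              = (M * LinearMap.toMatrix' (f.restrictScalars F)).mulVec v
          rw [← Matrix.mulVec_mulVec, ← Matrix.mulVec_mulVec]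
          have h1 : ∀ w, (LinearMap.toMatrix' (f.restrictScalars F)).mulVec w = f w := by
            intro w
            rw [← Matrix.toLin'_apply, Matrix.toLin'_toMatrix']
            rfl
          rw [h1, h1, show M.mulVec v = (AdjoinRoot.root M.charpoly) • v by rw [hsmul, hroot],
            _root_.map_smul, hsmul, hroot]⟩
      left_inv := fun A => by
        apply Subtype.ext
        apply (Matrix.toLinAlgEquiv' (R := F) (n := Fin n)).injective
        apply LinearMap.ext
        intro v
        show (LinearMap.toMatrix' _).mulVec v = A.1.mulVec v
        rw [← Matrix.toLin'_apply, Matrix.toLin'_toMatrix']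
        rfl
      right_inv := fun f => by
        apply LinearMap.ext
        intro v
        show (LinearMap.toMatrix' (f.restrictScalars F)).mulVec v = f v
        rw [← Matrix.toLin'_apply, Matrix.toLin'_toMatrix']
        rfl }
  rw [Nat.card_congr e]
  -- counting
  haveI : Module.Finite F K := (AdjoinRoot.powerBasis h.ne_zero).finite
  have hfrK : finrank F K = n := by
    rw [(AdjoinRoot.powerBasis h.ne_zero).finrank, AdjoinRoot.powerBasis_dim, hdeg]
  haveI : Finite K := Module.finite_of_finite F
  haveI : Fintype K := Fintype.ofFinite K
  have hK : Fintype.card K = q ^ n := by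
    rw [← hq, ← hfrK]
    exact card_eq_pow_finrank
  have hfrV : finrank K (Fin n → F) = 1 := by
    have h2 := Module.finrank_mul_finrank F K (Fin n → F)
    rw [hfrK, Module.finrank_pi] at h2
    have h3 : n * finrank K (Fin n → F) = n * 1 := by simpa using h2
    exact Nat.eq_of_mul_eq_mul_left (Nat.pos_of_ne_zero hn) h3
  haveI : Finite ((Fin n → F) →ₗ[K] (Fin n → F)) :=
    Finite.of_injective _ DFunLike.coe_injective
  haveI : Fintype ((Fin n → F) →ₗ[K] (Fin n → F)) := Fintype.ofFinite _
  rw [Nat.card_eq_fintype_card, card_eq_pow_finrank (K := K), Module.finrank_linearMap,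
    hfrV, hK, one_mul, pow_one]
end

section
/- If M ∈ M_n(F_q) has irreducible characteristic polynomial, then the centralizer (stabilizer under the conjugation action) of M in GL_n(F_q) has exactly q^n − 1 elements. -/
open Polynomial Matrix

set_option maxHeartbeats 1000000 in
theorem card_GL_centralizer_of_irreducible_charpoly
    (F : Type*) [Field F] [Fintype F] (q n : ℕ) (hq : Fintype.card F = q)
    (M : Matrix (Fin n) (Fin n) F) (h : Irreducible M.charpoly) :
    Nat.card {P : GL (Fin n) F // (P : Matrix (Fin n) (Fin n) F) * M = M * P} =
      q ^ n - 1 := by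
  subst hq
  set f := M.charpoly with hf
  have hmonic : f.Monic := M.charpoly_monic
  have hdeg : f.natDegree = n := by rw [hf, M.charpoly_natDegree_eq_dim, Fintype.card_fin]
  have hn : 0 < n := hdeg ▸ h.natDegree_pos
  haveI : Fact (Irreducible f) := ⟨h⟩
  haveI : Nonempty (Fin n) := ⟨⟨0, hn⟩⟩
  set K := AdjoinRoot f with hK
  have hroot : (Polynomial.aeval M) f = 0 := M.aeval_self_charpoly
  have hker : ∀ a ∈ Ideal.span ({f} : Set F[X]), (Polynomial.aeval M).toRingHom a = 0 := by
    intro a ha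
    obtain ⟨g, rfl⟩ := (Ideal.mem_span_singleton).mp ha
    simp [_root_.map_mul, hroot]
  set Θ : K →+* Matrix (Fin n) (Fin n) F :=
    Ideal.Quotient.lift (Ideal.span ({f} : Set F[X])) (Polynomial.aeval M).toRingHom hker
    with hΘdef
  have hΘ : ∀ p : F[X], Θ (AdjoinRoot.mk f p) = Polynomial.aeval M p := fun p =>
    Ideal.Quotient.lift_mk _ _ _
  -- matrices commuting with M commute with all polynomials in M
  have key : ∀ (A : Matrix (Fin n) (Fin n) F), A * M = M * A →
      ∀ p : F[X], A * Polynomial.aeval M p = Polynomial.aeval M p * A := by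
    intro A hA p
    induction p using Polynomial.induction_on' with
    | add p q hp hq => simp [mul_add, add_mul, hp, hq]
    | monomial k a =>
      have h1 : Commute A (M ^ k) := (show Commute A M from hA).pow_right k
      have h2 : Commute A (algebraMap F (Matrix (Fin n) (Fin n) F) a) :=
        (Algebra.commutes a A).symm
      simpa [Polynomial.aeval_monomial] using (h2.mul_right h1).eq
  have hΘM : ∀ c : K, Θ c * M = M * Θ c := by
    intro c
    obtain ⟨p, rfl⟩ := AdjoinRoot.mk_surjective c
    rw [hΘ]
    exact (key M rfl p).symm
  have hΘcomm : ∀ (A : Matrix (Fin n) (Fin n) F), A * M = M * A →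
      ∀ c : K, A * Θ c = Θ c * A := by
    intro A hA c
    obtain ⟨p, rfl⟩ := AdjoinRoot.mk_surjective c
    rw [hΘ]
    exact key A hA p
  -- the module structure on V = Fin n → F over K
  letI : SMul K (Fin n → F) := ⟨fun c v => Θ c *ᵥ v⟩
  have smul_def : ∀ (c : K) (v : Fin n → F), c • v = Θ c *ᵥ v := fun _ _ => rfl
  letI : Module K (Fin n → F) :=
    { one_smul := fun v => by show Θ 1 *ᵥ v = v; simp
      mul_smul := fun c d v => by
        show Θ (c * d) *ᵥ v = Θ c *ᵥ (Θ d *ᵥ v)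
        rw [_root_.map_mul, ← Matrix.mulVec_mulVec]
      smul_zero := fun c => by show Θ c *ᵥ 0 = 0; simp
      smul_add := fun c u v => by
        show Θ c *ᵥ (u + v) = Θ c *ᵥ u + Θ c *ᵥ v
        rw [Matrix.mulVec_add]
      add_smul := fun c d v => by
        show Θ (c + d) *ᵥ v = Θ c *ᵥ v + Θ d *ᵥ v
        rw [_root_.map_add, Matrix.add_mulVec]
      zero_smul := fun v => by show Θ 0 *ᵥ v = 0; simp }
  -- K is finite with q^n elements
  have hfne : f ≠ 0 := hmonic.ne_zero
  let pb := AdjoinRoot.powerBasis hfne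
  haveI : Module.Finite F K := Module.Finite.of_basis pb.basis
  haveI : Finite K := Module.finite_of_finite F
  haveI : Fintype K := Fintype.ofFinite K
  have hcardK : Fintype.card K = Fintype.card F ^ n := by
    rw [Module.card_fintype pb.basis]
    congr 1
    simp [pb, AdjoinRoot.powerBasis, hdeg]
  have hq2 : 2 ≤ Fintype.card F := Fintype.one_lt_card
  have hqn2 : 2 ≤ Fintype.card F ^ n :=
    le_trans hq2 (Nat.le_self_pow hn.ne' _)
  -- dimension of V over K is 1
  have hfinrank : Module.finrank K (Fin n → F) = 1 := by
    have hcV : Fintype.card (Fin n → F) = Fintype.card F ^ n := by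
      simp [Fintype.card_fun]
    have := Module.card_eq_pow_finrank (K := K) (V := Fin n → F)
    rw [hcV, hcardK] at this
    have h1 : (Fintype.card F ^ n) ^ 1 = (Fintype.card F ^ n) ^ Module.finrank K (Fin n → F) := by
      simpa using this
    exact (Nat.pow_right_injective hqn2 h1).symm
  -- a nonzero vector
  set v₀ : Fin n → F := Pi.single ⟨0, hn⟩ 1 with hv₀
  have hv₀ne : v₀ ≠ 0 := by
    intro hc
    have := congrFun hc ⟨0, hn⟩
    simp [hv₀] at this
  have hspan : ∀ w : Fin n → F, ∃ c : K, c • v₀ = w :=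
    (finrank_eq_one_iff_of_nonzero' v₀ hv₀ne).mp hfinrank
  -- surjectivity onto the centralizer
  have hsurj : ∀ A : Matrix (Fin n) (Fin n) F, A * M = M * A → ∃ c : K, Θ c = A := by
    intro A hA
    obtain ⟨c, hc⟩ := hspan (A *ᵥ v₀)
    rw [smul_def] at hc
    refine ⟨c, ?_⟩
    have hvec : ∀ u : Fin n → F, Θ c *ᵥ u = A *ᵥ u := by
      intro u
      obtain ⟨d, hd⟩ := hspan u
      rw [smul_def] at hd
      rw [← hd, Matrix.mulVec_mulVec, Matrix.mulVec_mulVec, ← _root_.map_mul, mul_comm c d, _root_.map_mul,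
        ← Matrix.mulVec_mulVec, hc, Matrix.mulVec_mulVec, ← hΘcomm A hA d,
        ← Matrix.mulVec_mulVec]
    ext i j
    have := congrFun (hvec (Pi.single j 1)) i
    simpa [Matrix.mulVec_single] using this
  have hinj : Function.Injective Θ := Θ.injective
  -- the bijection
  let E : {c : K // c ≠ 0} → {P : GL (Fin n) F // (P : Matrix (Fin n) (Fin n) F) * M = M * P} :=
    fun c =>
      ⟨⟨Θ c.1, Θ (c.1)⁻¹,
        by rw [← _root_.map_mul, mul_inv_cancel₀ c.2, _root_.map_one],
        by rw [← _root_.map_mul, inv_mul_cancel₀ c.2, _root_.map_one]⟩, hΘM c.1⟩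
  have hEbij : Function.Bijective E := by
    constructor
    · intro c d hcd
      have : Θ c.1 = Θ d.1 := congrArg (fun P => ((P.1 : GL (Fin n) F) : Matrix (Fin n) (Fin n) F)) hcd
      exact Subtype.ext (hinj this)
    · rintro ⟨P, hP⟩
      obtain ⟨c, hc⟩ := hsurj (P : Matrix (Fin n) (Fin n) F) hP
      have hcne : c ≠ 0 := by
        intro h0
        rw [h0, _root_.map_zero] at hc
        have : (1 : Matrix (Fin n) (Fin n) F) = 0 := by
          calc (1 : Matrix (Fin n) (Fin n) F) = (P : Matrix (Fin n) (Fin n) F) * ↑P⁻¹ :=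
                (Units.mul_inv P).symm
            _ = 0 := by rw [← hc, zero_mul]
        exact one_ne_zero this
      refine ⟨⟨c, hcne⟩, ?_⟩
      apply Subtype.ext
      apply Units.ext
      exact hc
  rw [← Nat.card_eq_of_bijective E hEbij, Nat.card_eq_fintype_card]
  have h1 : Fintype.card {c : K // c ≠ 0} = Fintype.card K - 1 := by
    classical
    rw [Fintype.card_subtype_compl (p := fun c : K => c = 0), Fintype.card_subtype_eq]
  rw [h1, hcardK]
end

section
/- If M ∈ M_n(F_q) has irreducible characteristic polynomial, then the conjugation orbit of M under GL_n(F_q) has exactly ∏_{i=1}^{n-1}(q^n − q^i) elements. -/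
open Polynomial MulAction

lemma commute_mem_range_aux {F : Type*} [Field F] {n : ℕ} (hn : n ≠ 0)
    (M : Matrix (Fin n) (Fin n) F) (h : Irreducible M.charpoly)
    (N : Matrix (Fin n) (Fin n) F) (hc : M * N = N * M) :
    ∃ f : F[X], Polynomial.aeval M f = N := by
  classical
  have hn0 : 0 < n := Nat.pos_of_ne_zero hn
  haveI : Nonempty (Fin n) := ⟨⟨0, hn0⟩⟩
  have hmon := M.charpoly_monic
  have hdeg : M.charpoly.natDegree = n := by simpa using M.charpoly_natDegree_eq_dim
  have hp0 : M.charpoly ≠ 0 := h.ne_zero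
  have hMN : Commute M N := hc
  have hcom : ∀ f : F[X], Commute N (Polynomial.aeval M f) := by
    intro f
    induction f using Polynomial.induction_on' with
    | add f g hf hg => simpa [map_add] using hf.add_right hg
    | monomial k a =>
        rw [Polynomial.aeval_monomial]
        exact (Algebra.commute_algebraMap_right a N).mul_right ((hMN.symm).pow_right k)
  set v : Fin n → F := Pi.single ⟨0, hn0⟩ 1 with hvdef
  have hv : v ≠ 0 := by
    intro h0
    have := congrFun h0 ⟨0, hn0⟩
    simp [hvdef] at this
  let I : Ideal F[X] :=
    { carrier := {g | (Polynomial.aeval M g).mulVec v = 0}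
      zero_mem' := by simp
      add_mem' := by
        intro a b ha hb
        simp only [Set.mem_setOf_eq, map_add, Matrix.add_mulVec] at *
        rw [ha, hb, add_zero]
      smul_mem' := by
        intro c x hx
        simp only [Set.mem_setOf_eq, smul_eq_mul, map_mul] at *
        rw [← Matrix.mulVec_mulVec, hx, Matrix.mulVec_zero] }
  have hpI : M.charpoly ∈ I := by
    show (Polynomial.aeval M M.charpoly).mulVec v = 0
    rw [Matrix.aeval_self_charpoly]
    simp
  have hItop : I ≠ ⊤ := by
    intro ht
    have h1 : (1 : F[X]) ∈ I := ht ▸ Submodule.mem_top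
    have : (Polynomial.aeval M (1:F[X])).mulVec v = 0 := h1
    rw [map_one, Matrix.one_mulVec] at this
    exact hv this
  have hspan : Ideal.span {M.charpoly} ≤ I := (Ideal.span_le).2 (by simpa using hpI)
  have hmax : (Ideal.span {M.charpoly}).IsMaximal :=
    PrincipalIdealRing.isMaximal_of_irreducible h
  have hIeq : I = Ideal.span {M.charpoly} := (hmax.eq_of_le hItop hspan).symm
  have hsurj : ∀ w : Fin n → F, ∃ f : F[X], (Polynomial.aeval M f).mulVec v = w := by
    let ψ : Polynomial.degreeLT F n →ₗ[F] (Fin n → F) :=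
      { toFun := fun f => (Polynomial.aeval M f.1).mulVec v
        map_add' := by
          intro a b
          simp [map_add, Matrix.add_mulVec]
        map_smul' := by
          intro c a
          simp only [SetLike.val_smul, map_smul, RingHom.id_apply]
          rw [Matrix.smul_mulVec] }
    have hinj : Function.Injective ψ := by
      rw [injective_iff_map_eq_zero]
      intro a ha
      have haI : (a : F[X]) ∈ I := ha
      rw [hIeq, Ideal.mem_span_singleton] at haI
      rcases eq_or_ne (a : F[X]) 0 with h0 | h0
      · exact Subtype.ext h0
      · exfalso
        have hle := Polynomial.degree_le_of_dvd haI h0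
        have hlt : (a : F[X]).degree < n := Polynomial.mem_degreeLT.mp a.2
        rw [Polynomial.degree_eq_natDegree hp0, hdeg] at hle
        exact absurd (lt_of_le_of_lt hle hlt) (lt_irrefl _)
    haveI : FiniteDimensional F (Polynomial.degreeLT F n) :=
      Module.Finite.equiv (Polynomial.degreeLTEquiv F n).symm
    have hfr : Module.finrank F (Polynomial.degreeLT F n) = Module.finrank F (Fin n → F) :=
      LinearEquiv.finrank_eq (Polynomial.degreeLTEquiv F n)
    have hsurj' : Function.Surjective ψ :=
      (LinearMap.injective_iff_surjective_of_finrank_eq_finrank hfr).mp hinj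
    intro w
    obtain ⟨f, hf⟩ := hsurj' w
    exact ⟨f.1, hf⟩
  obtain ⟨g, hg⟩ := hsurj (N.mulVec v)
  refine ⟨g, ?_⟩
  have key : ∀ w, (Polynomial.aeval M g).mulVec w = N.mulVec w := by
    intro w
    obtain ⟨f, hf⟩ := hsurj w
    calc (Polynomial.aeval M g).mulVec w
        = (Polynomial.aeval M g).mulVec ((Polynomial.aeval M f).mulVec v) := by rw [hf]
      _ = (Polynomial.aeval M (g * f)).mulVec v := by rw [Matrix.mulVec_mulVec, ← map_mul]
      _ = (Polynomial.aeval M f * Polynomial.aeval M g).mulVec v := by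
          rw [mul_comm g f, map_mul]
      _ = (Polynomial.aeval M f).mulVec ((Polynomial.aeval M g).mulVec v) := by
          rw [Matrix.mulVec_mulVec]
      _ = (Polynomial.aeval M f).mulVec (N.mulVec v) := by rw [hg]
      _ = (Polynomial.aeval M f * N).mulVec v := by rw [Matrix.mulVec_mulVec]
      _ = (N * Polynomial.aeval M f).mulVec v := by rw [← (hcom f).eq]
      _ = N.mulVec ((Polynomial.aeval M f).mulVec v) := by rw [Matrix.mulVec_mulVec]
      _ = N.mulVec w := by rw [hf]
  apply Matrix.toLin'.injective
  apply LinearMap.ext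
  intro w
  simpa [Matrix.toLin'_apply] using key w

theorem card_conjugation_orbit_of_irreducible_charpoly
    (F : Type*) [Field F] [Fintype F] (q n : ℕ) (hq : Fintype.card F = q)
    (M : Matrix (Fin n) (Fin n) F) (h : Irreducible M.charpoly) :
    Nat.card {N : Matrix (Fin n) (Fin n) F //
        ∃ P : GL (Fin n) F, N = (P : Matrix (Fin n) (Fin n) F) * M * (↑P⁻¹ : Matrix (Fin n) (Fin n) F)} =
      ∏ i ∈ Finset.Ico 1 n, (q ^ n - q ^ i) := by
  classical
  have hn : n ≠ 0 := by
    rintro rfl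
    exact h.not_isUnit (by simp [Matrix.charpoly, Matrix.det_fin_zero])
  have hn0 : 0 < n := Nat.pos_of_ne_zero hn
  haveI : Nonempty (Fin n) := ⟨⟨0, hn0⟩⟩
  have hq2 : 1 < q := hq ▸ Fintype.one_lt_card
  have hmon := M.charpoly_monic
  have hdeg : M.charpoly.natDegree = n := by simpa using M.charpoly_natDegree_eq_dim
  have hp0 : M.charpoly ≠ 0 := h.ne_zero
  have hmin : minpoly F M = M.charpoly :=
    (minpoly.eq_of_irreducible_of_monic h (Matrix.aeval_self_charpoly M) hmon).symm
  -- the orbit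
  have horb : Nat.card {N : Matrix (Fin n) (Fin n) F //
        ∃ P : GL (Fin n) F, N = (P : Matrix (Fin n) (Fin n) F) * M * (↑P⁻¹ : Matrix (Fin n) (Fin n) F)}
      = Nat.card (orbit (ConjAct (GL (Fin n) F)) M) := by
    apply Nat.card_congr
    apply Equiv.subtypeEquivRight
    intro N
    constructor
    · rintro ⟨P, rfl⟩
      refine ⟨ConjAct.toConjAct P, ?_⟩
      show ConjAct.toConjAct P • M = _
      rw [ConjAct.units_smul_def, ConjAct.ofConjAct_toConjAct]
    · rintro ⟨g, rfl⟩
      refine ⟨ConjAct.ofConjAct g, ?_⟩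
      show g • M = _
      rw [ConjAct.units_smul_def]
  -- subalgebra of polynomials in M
  set S : Subalgebra F (Matrix (Fin n) (Fin n) F) := (Polynomial.aeval M).range with hS
  have hScomm : ∀ N ∈ S, M * N = N * M := by
    rintro N ⟨f, rfl⟩
    have key : ∀ f : F[X], Commute M (Polynomial.aeval M f) := by
      intro f
      induction f using Polynomial.induction_on' with
      | add f g hf hg => simpa [map_add] using hf.add_right hg
      | monomial k a =>
          rw [Polynomial.aeval_monomial]
          exact (Algebra.commute_algebraMap_right a M).mul_right ((Commute.refl M).pow_right k)
    exact key f
  have hmem : ∀ N : Matrix (Fin n) (Fin n) F, M * N = N * M → N ∈ S := by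
    intro N hc
    obtain ⟨f, hf⟩ := commute_mem_range_aux hn M h N hc
    exact ⟨f, hf⟩
  -- stabilizer ≃ Sˣ
  have hstab1 : ∀ g ∈ stabilizer (ConjAct (GL (Fin n) F)) M,
      ((ConjAct.ofConjAct g : GL (Fin n) F) : Matrix (Fin n) (Fin n) F) * M
        = M * ((ConjAct.ofConjAct g : GL (Fin n) F) : Matrix (Fin n) (Fin n) F) ∧
      (↑(ConjAct.ofConjAct g)⁻¹ : Matrix (Fin n) (Fin n) F) * M
        = M * (↑(ConjAct.ofConjAct g)⁻¹ : Matrix (Fin n) (Fin n) F) := by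
    intro g hg0
    set u : GL (Fin n) F := ConjAct.ofConjAct g with hu
    have hg : (u : Matrix (Fin n) (Fin n) F) * M * (↑u⁻¹ : Matrix (Fin n) (Fin n) F) = M := by
      have := hg0
      rwa [MulAction.mem_stabilizer_iff, ConjAct.units_smul_def] at this
    have hab : (u : Matrix (Fin n) (Fin n) F) * (↑u⁻¹ : Matrix (Fin n) (Fin n) F) = 1 :=
      u.mul_inv
    have hba : (↑u⁻¹ : Matrix (Fin n) (Fin n) F) * (u : Matrix (Fin n) (Fin n) F) = 1 :=
      u.inv_mul
    constructor
    · conv_lhs => rw [← mul_one ((u : Matrix (Fin n) (Fin n) F) * M), ← hba, ← mul_assoc]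
      rw [hg]
    · conv_lhs => rw [← hg]
      rw [← mul_assoc, ← mul_assoc, hba, one_mul]
  have hstabeq : Nat.card (stabilizer (ConjAct (GL (Fin n) F)) M) = Nat.card Sˣ := by
    refine Nat.card_congr
      { toFun := fun g =>
          ⟨⟨((ConjAct.ofConjAct g.1 : GL (Fin n) F) : Matrix (Fin n) (Fin n) F),
              hmem _ ((hstab1 g.1 g.2).1).symm⟩,
           ⟨(↑(ConjAct.ofConjAct g.1)⁻¹ : Matrix (Fin n) (Fin n) F),
              hmem _ ((hstab1 g.1 g.2).2).symm⟩,
           Subtype.ext (ConjAct.ofConjAct g.1).mul_inv,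
           Subtype.ext (ConjAct.ofConjAct g.1).inv_mul⟩
        invFun := fun s =>
          ⟨ConjAct.toConjAct (⟨s.val.1, s.inv.1, congrArg Subtype.val s.val_inv,
              congrArg Subtype.val s.inv_val⟩ : (Matrix (Fin n) (Fin n) F)ˣ), by
            have h1 : M * (s.val : Matrix (Fin n) (Fin n) F)
                = (s.val : Matrix (Fin n) (Fin n) F) * M := hScomm _ s.val.2
            rw [MulAction.mem_stabilizer_iff, ConjAct.units_smul_def,
              ConjAct.ofConjAct_toConjAct]
            show (s.val : Matrix (Fin n) (Fin n) F) * M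
                * (s.inv : Matrix (Fin n) (Fin n) F) = M
            rw [← h1, mul_assoc,
              show ((s.val : Matrix (Fin n) (Fin n) F)
                  * (s.inv : Matrix (Fin n) (Fin n) F)) = 1
                from congrArg Subtype.val s.val_inv, mul_one]⟩
        left_inv := fun g =>
          Subtype.ext (congrArg ConjAct.toConjAct (Units.ext rfl))
        right_inv := fun s => Units.ext (Subtype.ext rfl) }
  -- card of Sˣ
  have hSunits : Nat.card Sˣ = q ^ n - 1 := by
    have hker : RingHom.ker (Polynomial.aeval M : F[X] →ₐ[F] Matrix (Fin n) (Fin n) F) =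
        Ideal.span {M.charpoly} := by
      rw [minpoly.ker_aeval_eq_span_minpoly, hmin, Ideal.submodule_span_eq]
    have e2 : (F[X] ⧸ Ideal.span {M.charpoly}) ≃ₐ[F] S := by
      have e1 := Ideal.quotientKerEquivRange
        (Polynomial.aeval M : F[X] →ₐ[F] Matrix (Fin n) (Fin n) F)
      exact (Ideal.quotientEquivAlgOfEq F hker.symm).trans e1
    haveI : Fact (Irreducible M.charpoly) := ⟨h⟩
    have e3 : (AdjoinRoot M.charpoly)ˣ ≃* Sˣ :=
      Units.mapEquiv (e2.toRingEquiv.toMulEquiv)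
    rw [← Nat.card_congr e3.toEquiv, Nat.card_units]
    have hfr : Module.finrank F (AdjoinRoot M.charpoly) = n := by
      rw [PowerBasis.finrank (AdjoinRoot.powerBasis hp0)]
      exact hdeg
    haveI : Finite (AdjoinRoot M.charpoly) := by
      have e4 := ((AdjoinRoot.powerBasis hp0).basis).equivFun
      exact Finite.of_equiv _ e4.toEquiv.symm
    haveI : Fintype (AdjoinRoot M.charpoly) := Fintype.ofFinite _
    rw [Nat.card_eq_fintype_card, Module.card_eq_pow_finrank (K := F), hfr, hq]
  -- orbit-stabilizer
  have hos : Nat.card (orbit (ConjAct (GL (Fin n) F)) M)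
      * Nat.card (stabilizer (ConjAct (GL (Fin n) F)) M)
      = Nat.card (GL (Fin n) F) := by
    rw [← Nat.card_prod]
    exact Nat.card_congr (orbitProdStabilizerEquivGroup (ConjAct (GL (Fin n) F)) M)
  have hGL : Nat.card (GL (Fin n) F) = ∏ i : Fin n, (q ^ n - q ^ (i : ℕ)) := by
    rw [Matrix.card_GL_field, hq]
  have hsplit : ∏ i : Fin n, (q ^ n - q ^ (i : ℕ))
      = (q ^ n - 1) * ∏ i ∈ Finset.Ico 1 n, (q ^ n - q ^ i) := by
    rw [Fin.prod_univ_eq_prod_range (fun i => q ^ n - q ^ i) n, Finset.range_eq_Ico,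
      Finset.prod_eq_prod_Ico_succ_bot hn0]
    simp
  have hpos : 0 < q ^ n - 1 := by
    have : 1 < q ^ n := Nat.one_lt_pow hn hq2
    omega
  apply Nat.eq_of_mul_eq_mul_right hpos
  rw [horb]
  calc Nat.card (orbit (ConjAct (GL (Fin n) F)) M) * (q ^ n - 1)
      = Nat.card (orbit (ConjAct (GL (Fin n) F)) M)
        * Nat.card (stabilizer (ConjAct (GL (Fin n) F)) M) := by
        rw [hstabeq, hSunits]
    _ = Nat.card (GL (Fin n) F) := hos
    _ = (∏ i ∈ Finset.Ico 1 n, (q ^ n - q ^ i)) * (q ^ n - 1) := by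
        rw [hGL, hsplit, mul_comm]
end

section
/- Let F_q be a finite field and f a monic irreducible polynomial of degree n over F_q. The number of matrices in M_n(F_q) with characteristic polynomial f equals |GL_n(F_q)| / (q^n − 1). -/
open Polynomial Matrix

section Aux

variable {F : Type*} [Field F] {n : ℕ}

private lemma sum_mulVec' {ι : Type*} (s : Finset ι) (A : ι → Matrix (Fin n) (Fin n) F)
    (v : Fin n → F) : (∑ i ∈ s, A i) *ᵥ v = ∑ i ∈ s, A i *ᵥ v := by
  induction s using Finset.cons_induction with
  | empty => simp
  | cons a s ha ih => rw [Finset.sum_cons, Finset.sum_cons, Matrix.add_mulVec, ih]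

private lemma aeval_mulVec' {m : ℕ} {p : F[X]} (hlt : p.natDegree < m)
    (M : Matrix (Fin n) (Fin n) F) (v : Fin n → F) :
    (aeval M p) *ᵥ v = ∑ i ∈ Finset.range m, p.coeff i • (M ^ i *ᵥ v) := by
  rw [Polynomial.aeval_eq_sum_range' hlt, sum_mulVec']
  exact Finset.sum_congr rfl fun i _ => Matrix.smul_mulVec _ _ _

private lemma units_conj_pow' {M : Type*} [Monoid M] (u : Mˣ) (x : M) (j : ℕ) :
    ((↑u * x * ↑u⁻¹ : M) ^ j) = ↑u * x ^ j * ↑u⁻¹ := by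
  induction j with
  | zero => simp [Units.mul_inv]
  | succ k ih =>
    rw [pow_succ, pow_succ, ih, mul_assoc, mul_assoc, mul_assoc]
    simp [mul_assoc, Units.inv_mul_cancel_left]

private lemma charpoly_units_conj' (u : (Matrix (Fin n) (Fin n) F)ˣ)
    (A : Matrix (Fin n) (Fin n) F) :
    ((u : Matrix (Fin n) (Fin n) F) * A *
      ((u⁻¹ : (Matrix (Fin n) (Fin n) F)ˣ) : Matrix (Fin n) (Fin n) F)).charpoly
      = A.charpoly := by
  set g : Matrix (Fin n) (Fin n) F := (u : Matrix (Fin n) (Fin n) F) with hg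
  set gi : Matrix (Fin n) (Fin n) F := ((u⁻¹ : (Matrix (Fin n) (Fin n) F)ˣ) :
    Matrix (Fin n) (Fin n) F) with hgi
  let φ : Matrix (Fin n) (Fin n) F →+* Matrix (Fin n) (Fin n) F[X] :=
    RingHom.mapMatrix (C : F →+* F[X])
  have hgg : g * gi = 1 := u.mul_inv
  have hcomm : Commute (Matrix.scalar (Fin n) (X : F[X])) (φ g) :=
    scalar_commute _ (fun r' => Commute.all _ _) _
  have hdet1 : (φ g).det * (φ gi).det = 1 := by
    rw [← Matrix.det_mul, ← _root_.map_mul, hgg, _root_.map_one, Matrix.det_one]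
  have hcm : charmatrix (g * A * gi) = φ g * charmatrix A * φ gi := by
    show Matrix.scalar (Fin n) (X : F[X]) - φ (g * A * gi)
        = φ g * (Matrix.scalar (Fin n) (X : F[X]) - φ A) * φ gi
    rw [mul_sub, sub_mul, _root_.map_mul, _root_.map_mul]
    congr 1
    rw [← hcomm.eq, mul_assoc, ← _root_.map_mul, hgg, _root_.map_one, mul_one]
  unfold Matrix.charpoly
  rw [hcm, Matrix.det_mul, Matrix.det_mul, mul_comm, ← mul_assoc, mul_comm ((φ gi).det), hdet1, one_mul]

private lemma isUnit_phi {f : F[X]} (hmonic : f.Monic) (hirr : Irreducible f)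
    (hdeg : f.natDegree = n) {M : Matrix (Fin n) (Fin n) F} (hM : M.charpoly = f)
    {v : Fin n → F} (hv : v ≠ 0) :
    IsUnit (Matrix.of fun i j : Fin n => (M ^ (j : ℕ) *ᵥ v) i) := by
  rw [← Matrix.linearIndependent_cols_iff_isUnit]
  show LinearIndependent F fun j : Fin n => M ^ (j : ℕ) *ᵥ v
  rw [Fintype.linearIndependent_iff]
  intro c hc
  set p : F[X] := ∑ j : Fin n, C (c j) * X ^ (j : ℕ) with hp
  have hcoeff : ∀ j : Fin n, p.coeff (j : ℕ) = c j := by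
    intro j
    rw [hp, Polynomial.finset_sum_coeff]
    simp only [Polynomial.coeff_C_mul, Polynomial.coeff_X_pow, mul_ite, mul_one, mul_zero]
    simp [Fin.val_eq_val, eq_comm]
  have hfM : aeval M f = 0 := by rw [← hM]; exact Matrix.aeval_self_charpoly M
  have key : p = 0 := by
    by_contra hp0
    have hdegp : p.natDegree < n := by
      rw [Polynomial.natDegree_lt_iff_degree_lt hp0]
      apply lt_of_le_of_lt (Polynomial.degree_sum_le _ _)
      rw [Finset.sup_lt_iff (by exact_mod_cast WithBot.bot_lt_coe n)]
      intro j _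
      exact lt_of_le_of_lt (Polynomial.degree_C_mul_X_pow_le _ _)
        (by exact_mod_cast j.isLt)
    have hndvd : ¬ f ∣ p := fun hdvd =>
      absurd (Polynomial.natDegree_le_of_dvd hdvd hp0) (by rw [hdeg]; omega)
    obtain ⟨a, b, hab⟩ := (hirr.coprime_iff_not_dvd).mpr hndvd
    have hpM : (aeval M p) *ᵥ v = 0 := by
      rw [aeval_mulVec' hdegp,
        ← Fin.sum_univ_eq_sum_range (fun i => p.coeff i • (M ^ i *ᵥ v)), ← hc]
      exact Finset.sum_congr rfl fun j _ => by rw [hcoeff j]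
    have hv0 : v = 0 := by
      have h1 : aeval M (a * f + b * p) = 1 := by rw [hab, _root_.map_one]
      calc v = (1 : Matrix (Fin n) (Fin n) F) *ᵥ v := (Matrix.one_mulVec v).symm
        _ = (aeval M (a * f + b * p)) *ᵥ v := by rw [h1]
        _ = 0 := by
            rw [_root_.map_add, _root_.map_mul, _root_.map_mul, hfM, mul_zero, zero_add, ← Matrix.mulVec_mulVec,
              hpM, Matrix.mulVec_zero]
    exact hv hv0
  intro j
  rw [← hcoeff j, key, Polynomial.coeff_zero]

private lemma mulVec_pow_eq_sum {f : F[X]} (hmonic : f.Monic) (hf1 : f ≠ 1)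
    (hdeg : f.natDegree = n) {M : Matrix (Fin n) (Fin n) F} (hM : M.charpoly = f)
    (v : Fin n → F) (j : ℕ) :
    M ^ j *ᵥ v = ∑ k ∈ Finset.range n, ((X ^ j : F[X]) %ₘ f).coeff k • (M ^ k *ᵥ v) := by
  have hfM : aeval M f = 0 := by rw [← hM]; exact Matrix.aeval_self_charpoly M
  have hlt : ((X ^ j : F[X]) %ₘ f).natDegree < n := by
    rw [← hdeg]; exact Polynomial.natDegree_modByMonic_lt _ hmonic hf1
  calc M ^ j *ᵥ v = (aeval M (X ^ j : F[X])) *ᵥ v := by rw [Polynomial.aeval_X_pow]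
    _ = (aeval M ((X ^ j : F[X]) %ₘ f)) *ᵥ v := by
        conv_lhs => rw [← Polynomial.modByMonic_add_div (X ^ j : F[X]) f]
        rw [_root_.map_add, _root_.map_mul, hfM, zero_mul, add_zero]
    _ = _ := aeval_mulVec' hlt M v

private lemma mul_phi_eq (M : Matrix (Fin n) (Fin n) F) (v : Fin n → F) :
    M * (Matrix.of fun i j : Fin n => (M ^ (j : ℕ) *ᵥ v) i)
      = Matrix.of fun i j : Fin n => (M ^ ((j : ℕ) + 1) *ᵥ v) i := by
  ext i j
  have h : M ^ ((j : ℕ) + 1) *ᵥ v = M *ᵥ (M ^ (j : ℕ) *ᵥ v) := by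
    rw [Matrix.mulVec_mulVec, ← pow_succ']
  simp only [Matrix.mul_apply, Matrix.of_apply]
  rw [h]
  simp [Matrix.mulVec, dotProduct]

private lemma exists_base {f : F[X]} (hmonic : f.Monic) (hirr : Irreducible f)
    (hdeg : f.natDegree = n) (hn : 0 < n) :
    ∃ C0 : Matrix (Fin n) (Fin n) F, C0.charpoly = f ∧
      ∀ j : Fin n, C0 ^ (j : ℕ) *ᵥ (Pi.single (⟨0, hn⟩ : Fin n) 1 : Fin n → F)
        = Pi.single j 1 := by
  have hf0 : f ≠ 0 := hmonic.ne_zero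
  let K := AdjoinRoot f
  let pb : PowerBasis F K := AdjoinRoot.powerBasis' hmonic
  haveI : Module.Free F K := Module.Free.of_basis pb.basis
  haveI : Module.Finite F K := Module.Finite.of_basis pb.basis
  have hdim : pb.dim = n := by rw [AdjoinRoot.powerBasis'_dim, hdeg]
  let e : Fin pb.dim ≃ Fin n := finCongr hdim
  let b : Module.Basis (Fin n) F K := pb.basis.reindex e
  have hb : ∀ k : Fin n, b k = AdjoinRoot.root f ^ (k : ℕ) := by
    intro k
    rw [Module.Basis.reindex_apply]
    calc pb.basis (e.symm k) = pb.gen ^ ((e.symm k : Fin pb.dim) : ℕ) :=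
          congrFun pb.coe_basis _
      _ = AdjoinRoot.root f ^ (k : ℕ) := by
          simp [e, pb, finCongr, AdjoinRoot.powerBasis'_gen]
  have hrepr : ∀ k : Fin n, ⇑(b.repr (AdjoinRoot.root f ^ (k : ℕ))) = Pi.single k (1 : F) := by
    intro k
    rw [← hb k, Module.Basis.repr_self]
    exact Finsupp.single_eq_pi_single _ _
  refine ⟨Algebra.leftMulMatrix b (AdjoinRoot.root f), ?_, ?_⟩
  · rw [Algebra.leftMulMatrix_apply, LinearMap.charpoly_toMatrix,
      ← LinearMap.charpoly_toMatrix (Algebra.lmul F K (AdjoinRoot.root f)) pb.basis,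
      ← Algebra.leftMulMatrix_apply]
    have hgen : pb.gen = AdjoinRoot.root f := AdjoinRoot.powerBasis'_gen hmonic
    rw [← hgen, charpoly_leftMulMatrix pb, hgen, AdjoinRoot.minpoly_root hf0,
      hmonic.leadingCoeff, inv_one, Polynomial.C_1, mul_one]
  · intro j
    rw [← _root_.map_pow, ← hrepr ⟨0, hn⟩,
      show (((⟨0, hn⟩ : Fin n) : ℕ)) = 0 from rfl, pow_zero,
      Algebra.leftMulMatrix_mulVec_repr, mul_one, hrepr j]

end Aux

theorem count_matrices_eq_card_GL_div
    (F : Type*) [Field F] [Fintype F] (q n : ℕ) (hq : Fintype.card F = q)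
    (f : Polynomial F) (hmonic : f.Monic) (hirr : Irreducible f)
    (hdeg : f.natDegree = n) :
    Nat.card {M : Matrix (Fin n) (Fin n) F // M.charpoly = f} =
      Nat.card (GL (Fin n) F) / (q ^ n - 1) := by
  classical
  have hn : 0 < n := by
    rcases Nat.eq_zero_or_pos n with h0 | h
    · exfalso
      exact hirr.not_isUnit (by rw [hmonic.natDegree_eq_zero.mp (by omega)]; exact isUnit_one)
    · exact h
  have hf1 : f ≠ 1 := fun h => hirr.not_isUnit (h ▸ isUnit_one)
  let S := {M : Matrix (Fin n) (Fin n) F // M.charpoly = f}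
  let V := {v : Fin n → F // v ≠ 0}
  let Φ : S × V → GL (Fin n) F := fun Mv => (isUnit_phi hmonic hirr hdeg Mv.1.2 Mv.2.2).unit
  have hΦcoe : ∀ Mv : S × V, ((Φ Mv : GL (Fin n) F) : Matrix (Fin n) (Fin n) F)
      = Matrix.of fun i j : Fin n => ((Mv.1.1 ^ (j : ℕ)) *ᵥ Mv.2.1) i :=
    fun Mv => IsUnit.unit_spec _
  have hinj : Function.Injective Φ := by
    intro a b hab
    have hmat : (Matrix.of fun i j : Fin n => ((a.1.1 ^ (j : ℕ)) *ᵥ a.2.1) i)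
        = Matrix.of fun i j : Fin n => ((b.1.1 ^ (j : ℕ)) *ᵥ b.2.1) i := by
      rw [← hΦcoe a, ← hΦcoe b, hab]
    have hcols : ∀ j : Fin n, a.1.1 ^ (j : ℕ) *ᵥ a.2.1 = b.1.1 ^ (j : ℕ) *ᵥ b.2.1 := by
      intro j
      funext i
      exact congrFun (congrFun (Matrix.of.injective hmat) i) j
    have hv : a.2.1 = b.2.1 := by
      have h0 := hcols ⟨0, hn⟩
      simpa using h0
    have hcols' : ∀ k, k < n → a.1.1 ^ k *ᵥ a.2.1 = b.1.1 ^ k *ᵥ b.2.1 :=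
      fun k hk => hcols ⟨k, hk⟩
    have hmul : a.1.1 * ((Φ a : GL (Fin n) F) : Matrix (Fin n) (Fin n) F)
        = b.1.1 * ((Φ a : GL (Fin n) F) : Matrix (Fin n) (Fin n) F) := by
      rw [hΦcoe a, mul_phi_eq, hmat, mul_phi_eq]
      congr 1
      funext i j
      have key : a.1.1 ^ ((j : ℕ) + 1) *ᵥ a.2.1 = b.1.1 ^ ((j : ℕ) + 1) *ᵥ b.2.1 := by
        rw [mulVec_pow_eq_sum hmonic hf1 hdeg a.1.2 a.2.1 ((j : ℕ) + 1),
          mulVec_pow_eq_sum hmonic hf1 hdeg b.1.2 b.2.1 ((j : ℕ) + 1)]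
        exact Finset.sum_congr rfl fun k hk => by
          rw [hcols' k (Finset.mem_range.mp hk)]
      rw [key]
    have hM : a.1.1 = b.1.1 := (Units.mul_left_inj (Φ a)).mp hmul
    exact Prod.ext (Subtype.ext hM) (Subtype.ext hv)
  have hsurj : Function.Surjective Φ := by
    intro u
    obtain ⟨C0, hC0, hcols⟩ := exists_base hmonic hirr hdeg hn
    have hu : ((u : Matrix (Fin n) (Fin n) F) * C0 *
        ((u⁻¹ : (Matrix (Fin n) (Fin n) F)ˣ) : Matrix (Fin n) (Fin n) F)).charpoly = f := by
      rw [_root_.charpoly_units_conj' u C0, hC0]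
    have hvne : ((u : Matrix (Fin n) (Fin n) F) *ᵥ Pi.single (⟨0, hn⟩ : Fin n) 1) ≠ 0 := by
      intro h0
      have hinj' : Function.Injective ((u : Matrix (Fin n) (Fin n) F).mulVec) :=
        Matrix.mulVec_injective_iff_isUnit.mpr u.isUnit
      have h1 : (Pi.single (⟨0, hn⟩ : Fin n) (1 : F)) = 0 :=
        hinj' (by rw [h0, Matrix.mulVec_zero])
      simpa using congrFun h1 ⟨0, hn⟩
    refine ⟨⟨⟨_, hu⟩, ⟨_, hvne⟩⟩, ?_⟩
    apply Units.ext
    rw [hΦcoe]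
    ext i j
    rw [Matrix.of_apply]
    have hco : ((u : Matrix (Fin n) (Fin n) F) * C0 *
        ((u⁻¹ : (Matrix (Fin n) (Fin n) F)ˣ) : Matrix (Fin n) (Fin n) F)) ^ (j : ℕ)
        = (u : Matrix (Fin n) (Fin n) F) * C0 ^ (j : ℕ) *
          ((u⁻¹ : (Matrix (Fin n) (Fin n) F)ˣ) : Matrix (Fin n) (Fin n) F) :=
      units_conj_pow' u C0 (j : ℕ)
    rw [hco, Matrix.mulVec_mulVec, mul_assoc, mul_assoc]
    have : ((u⁻¹ : (Matrix (Fin n) (Fin n) F)ˣ) : Matrix (Fin n) (Fin n) F) *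
        (u : Matrix (Fin n) (Fin n) F) = 1 := u.inv_mul
    rw [this, mul_one, ← Matrix.mulVec_mulVec, hcols j, Matrix.mulVec_single]
    simp
  have hcard := Nat.card_eq_of_bijective Φ ⟨hinj, hsurj⟩
  rw [Nat.card_prod] at hcard
  have hV : Nat.card V = q ^ n - 1 := by
    rw [Nat.card_eq_fintype_card]
    have h1 : Fintype.card V
        = Fintype.card (Fin n → F) - Fintype.card {v : Fin n → F // v = 0} :=
      Fintype.card_subtype_compl _
    rw [h1, Fintype.card_subtype_eq (0 : Fin n → F)]
    congr 1
    simp [hq]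
  rw [hV] at hcard
  rw [← hcard, Nat.mul_div_cancel _ (Nat.sub_pos_of_lt (Nat.one_lt_pow hn.ne'
    (hq ▸ Fintype.one_lt_card)))]
end

section
/- For M ∈ M_n(F) with irreducible characteristic polynomial, the centralizer of M in GL_n(F_q) equals the set of nonzero elements of F[M], and is a cyclic group of order q^n − 1 when F = F_q. -/
open Polynomial Matrix

set_option maxHeartbeats 2000000 in
theorem GL_centralizer_structure_of_irreducible_charpoly
    (F : Type*) [Field F] [Fintype F] (q n : ℕ) (hq : Fintype.card F = q)
    (M : Matrix (Fin n) (Fin n) F) (h : Irreducible M.charpoly) :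
    (∀ P : GL (Fin n) F,
        (P : Matrix (Fin n) (Fin n) F) * M = M * P ↔
          (P : Matrix (Fin n) (Fin n) F) ∈ Algebra.adjoin F {M} ∧
            (P : Matrix (Fin n) (Fin n) F) ≠ 0) ∧
      ∃ H : Subgroup (GL (Fin n) F),
        (∀ P : GL (Fin n) F,
          P ∈ H ↔ (P : Matrix (Fin n) (Fin n) F) * M = M * P) ∧
        IsCyclic H ∧ Nat.card H = q ^ n - 1 := by
  classical
  have hdeg : M.charpoly.natDegree = n := by
    simpa using M.charpoly_natDegree_eq_dim
  have hn : n ≠ 0 := by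
    intro hn0
    have h1 : M.charpoly = 1 :=
      (Polynomial.Monic.natDegree_eq_zero M.charpoly_monic).mp (by omega)
    exact h.not_isUnit (h1 ▸ isUnit_one)
  haveI : NeZero n := ⟨hn⟩
  haveI : Nontrivial (Matrix (Fin n) (Fin n) F) := by
    refine ⟨0, 1, fun h0 => ?_⟩
    have := congrFun (congrFun h0 ⟨0, Nat.pos_of_ne_zero hn⟩) ⟨0, Nat.pos_of_ne_zero hn⟩
    simp [Matrix.one_apply] at this
  -- integrality and minimal polynomial
  have hM : IsIntegral F M := ⟨M.charpoly, M.charpoly_monic, M.aeval_self_charpoly⟩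
  have hmin : minpoly F M = M.charpoly := by
    obtain ⟨e, he⟩ := minpoly.dvd F M M.aeval_self_charpoly
    rcases h.isUnit_or_isUnit he with hu | hu
    · exfalso
      have := Polynomial.natDegree_eq_zero_of_isUnit hu
      have := minpoly.natDegree_pos hM
      omega
    · exact Polynomial.eq_of_monic_of_associated (minpoly.monic hM) M.charpoly_monic
        ⟨hu.unit, by rw [IsUnit.unit_spec]; exact he.symm⟩
  -- membership of aeval in the adjoin
  have hmem : ∀ g : F[X], aeval M g ∈ Algebra.adjoin F {M} := by
    intro g
    rw [Algebra.adjoin_singleton_eq_range_aeval]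
    exact ⟨g, rfl⟩
  -- cyclic vector
  set v : Fin n → F := Pi.single ⟨0, Nat.pos_of_ne_zero hn⟩ 1 with hv_def
  have hv : v ≠ 0 := by
    intro h0
    have := congrFun h0 ⟨0, Nat.pos_of_ne_zero hn⟩
    simp [hv_def] at this
  let ψ : Polynomial.degreeLT F n →ₗ[F] (Fin n → F) :=
    { toFun := fun g => (aeval M (g : F[X])).mulVec v
      map_add' := by
        intro a b
        simp [Matrix.add_mulVec]
      map_smul' := by
        intro c a
        simp [Matrix.smul_mulVec] }
  have hinj : Function.Injective ψ := by
    rw [injective_iff_map_eq_zero]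
    rintro ⟨g, hg⟩ hg0
    simp only [ψ, LinearMap.coe_mk, AddHom.coe_mk] at hg0
    rw [Submodule.mk_eq_zero]
    by_contra hgne
    have hnd : ¬ M.charpoly ∣ g := by
      intro hdvd
      exact hgne (Polynomial.eq_zero_of_dvd_of_degree_lt hdvd
        (by rw [Polynomial.degree_eq_natDegree (h.ne_zero), hdeg]
            exact (Polynomial.mem_degreeLT.mp hg)))
    obtain ⟨a, b, hab⟩ := h.coprime_iff_not_dvd.mpr hnd
    have h1 : (aeval M (b * g)) *ᵥ v = 0 := by
      rw [_root_.map_mul, ← Matrix.mulVec_mulVec, hg0, Matrix.mulVec_zero]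
    have h2 : (aeval M (a * M.charpoly)) *ᵥ v = 0 := by
      rw [_root_.map_mul, M.aeval_self_charpoly, mul_zero, Matrix.zero_mulVec]
    have h3 := congrArg (fun p => (aeval M p) *ᵥ v) hab
    simp only [map_add, Matrix.add_mulVec, h1, h2, _root_.map_one, Matrix.one_mulVec,
      add_zero, zero_add] at h3
    exact hv h3.symm
  have hsurj : Function.Surjective ψ := by
    haveI : FiniteDimensional F (Polynomial.degreeLT F n) :=
      LinearEquiv.finiteDimensional (Polynomial.degreeLTEquiv F n).symm
    have hfr : Module.finrank F (Polynomial.degreeLT F n) = Module.finrank F (Fin n → F) := by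
      rw [LinearEquiv.finrank_eq (Polynomial.degreeLTEquiv F n)]
    exact (LinearMap.injective_iff_surjective_of_finrank_eq_finrank hfr).mp hinj
  have key : ∀ w : Fin n → F, ∃ g : F[X], (aeval M g).mulVec v = w := by
    intro w
    obtain ⟨⟨g, _⟩, hg⟩ := hsurj w
    exact ⟨g, hg⟩
  -- part 1
  have part1 : ∀ P : GL (Fin n) F,
      (P : Matrix (Fin n) (Fin n) F) * M = M * P ↔
        (P : Matrix (Fin n) (Fin n) F) ∈ Algebra.adjoin F {M} ∧
          (P : Matrix (Fin n) (Fin n) F) ≠ 0 := by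
    intro P
    constructor
    · intro hPM
      obtain ⟨g, hg⟩ := key ((P : Matrix (Fin n) (Fin n) F) *ᵥ v)
      have hPg : (P : Matrix (Fin n) (Fin n) F) = aeval M g := by
        apply Matrix.toLin'.injective
        apply LinearMap.ext
        intro w
        obtain ⟨p, hp⟩ := key w
        have hcomm : Commute (P : Matrix (Fin n) (Fin n) F) (aeval M p) :=
          Algebra.commute_of_mem_adjoin_singleton_of_commute (hmem p) hPM
        simp only [Matrix.toLin'_apply]
        calc (P : Matrix (Fin n) (Fin n) F) *ᵥ w
            = ((P : Matrix (Fin n) (Fin n) F) * aeval M p) *ᵥ v := by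
              rw [← hp, Matrix.mulVec_mulVec]
          _ = (aeval M p * (P : Matrix (Fin n) (Fin n) F)) *ᵥ v := by rw [hcomm.eq]
          _ = aeval M p *ᵥ ((P : Matrix (Fin n) (Fin n) F) *ᵥ v) := by
              rw [Matrix.mulVec_mulVec]
          _ = aeval M p *ᵥ (aeval M g *ᵥ v) := by rw [hg]
          _ = (aeval M (g * p)) *ᵥ v := by
              rw [Matrix.mulVec_mulVec, ← _root_.map_mul, mul_comm p g]
          _ = aeval M g *ᵥ (aeval M p *ᵥ v) := by
              rw [Matrix.mulVec_mulVec, _root_.map_mul]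
          _ = aeval M g *ᵥ w := by rw [hp]
      exact ⟨hPg ▸ hmem g, P.ne_zero⟩
    · rintro ⟨hPmem, -⟩
      exact (Algebra.commute_of_mem_adjoin_self hPmem).symm.eq
  refine ⟨part1, ?_⟩
  -- the field structure on the adjoin
  have hprime : Prime M.charpoly := h.prime
  haveI : Nontrivial (Algebra.adjoin F {M}) :=
    nontrivial_of_ne 0 1 (fun h01 => zero_ne_one (α := Matrix (Fin n) (Fin n) F)
      (congrArg Subtype.val h01))
  haveI : NoZeroDivisors (Algebra.adjoin F {M}) := by
    refine ⟨fun {a b} hab => ?_⟩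
    have ha2 : (a : Matrix (Fin n) (Fin n) F)
        ∈ (Polynomial.aeval (R := F) M).range := by
      rw [← Algebra.adjoin_singleton_eq_range_aeval]; exact a.2
    have hb2 : (b : Matrix (Fin n) (Fin n) F)
        ∈ (Polynomial.aeval (R := F) M).range := by
      rw [← Algebra.adjoin_singleton_eq_range_aeval]; exact b.2
    obtain ⟨g, hg⟩ := (AlgHom.mem_range _).mp ha2
    obtain ⟨g', hg'⟩ := (AlgHom.mem_range _).mp hb2
    have hgg' : aeval M (g * g') = 0 := by
      rw [_root_.map_mul, hg, hg']
      exact congrArg Subtype.val hab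
    have hdvd : M.charpoly ∣ g * g' := hmin ▸ minpoly.dvd F M hgg'
    rcases hprime.2.2 _ _ hdvd with hd | hd
    · left
      obtain ⟨t, rfl⟩ := hd
      apply Subtype.ext
      rw [← hg, _root_.map_mul, M.aeval_self_charpoly, zero_mul]
      rfl
    · right
      obtain ⟨t, rfl⟩ := hd
      apply Subtype.ext
      rw [← hg', _root_.map_mul, M.aeval_self_charpoly, zero_mul]
      rfl
  haveI : IsDomain (Algebra.adjoin F {M}) := NoZeroDivisors.to_isDomain _
  haveI : Finite (Algebra.adjoin F {M}) := Subtype.finite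
  letI : Field (Algebra.adjoin F {M}) := (Finite.isField_of_domain _).toField
  -- the subgroup
  let j : (Algebra.adjoin F {M})ˣ →* GL (Fin n) F :=
    Units.map ((Algebra.adjoin F {M}).val.toRingHom.toMonoidHom)
  have hjinj : Function.Injective j := by
    intro u u' huu
    have h2 : ((u : Algebra.adjoin F {M}) : Matrix (Fin n) (Fin n) F)
        = ((u' : Algebra.adjoin F {M}) : Matrix (Fin n) (Fin n) F) :=
      congrArg Units.val huu
    exact Units.ext (Subtype.ext h2)
  refine ⟨j.range, ?_, ?_, ?_⟩
  · intro P
    constructor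
    · rintro ⟨u, rfl⟩
      refine (part1 _).mpr ⟨?_, ?_⟩
      · exact (u : Algebra.adjoin F {M}).2
      · exact Units.ne_zero _
    · intro hc
      obtain ⟨hPmem, hPne⟩ := (part1 P).mp hc
      have ha : (⟨(P : Matrix (Fin n) (Fin n) F), hPmem⟩ : Algebra.adjoin F {M}) ≠ 0 := by
        simpa [Subtype.ext_iff] using hPne
      refine ⟨Units.mk0 _ ha, ?_⟩
      apply Units.ext
      rfl
  · exact isCyclic_of_surjective _ (MonoidHom.ofInjective hjinj).surjective
  · have hbij : Function.Bijective (fun g : Polynomial.degreeLT F n =>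
        (⟨aeval M (g : F[X]), hmem _⟩ : Algebra.adjoin F {M})) := by
      constructor
      · intro g g' hgg
        apply hinj
        have hval : aeval M (g : F[X]) = aeval M (g' : F[X]) := congrArg Subtype.val hgg
        show (aeval M (g : F[X])) *ᵥ v = (aeval M (g' : F[X])) *ᵥ v
        rw [hval]
      · rintro ⟨a, haa⟩
        have ha2 : a ∈ (Polynomial.aeval (R := F) M).range := by
          rw [← Algebra.adjoin_singleton_eq_range_aeval]; exact haa
        obtain ⟨g, hg⟩ := (AlgHom.mem_range _).mp ha2
        refine ⟨⟨g %ₘ M.charpoly, ?_⟩, ?_⟩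
        · have hdd : (n : WithBot ℕ) = M.charpoly.degree := by
            rw [Polynomial.degree_eq_natDegree h.ne_zero, hdeg]
          rw [Polynomial.mem_degreeLT, hdd]
          exact Polynomial.degree_modByMonic_lt g M.charpoly_monic
        · apply Subtype.ext
          show aeval M (g %ₘ M.charpoly) = a
          conv_rhs => rw [← hg, ← Polynomial.modByMonic_add_div g M.charpoly]
          rw [map_add, _root_.map_mul, M.aeval_self_charpoly, zero_mul, add_zero]
    have hcardA : Nat.card (Algebra.adjoin F {M}) = q ^ n := by
      rw [← Nat.card_congr (Equiv.ofBijective _ hbij),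
        Nat.card_congr (Polynomial.degreeLTEquiv F n).toEquiv]
      simp [Nat.card_eq_fintype_card, hq]
    have h1 : Nat.card j.range = Nat.card (Algebra.adjoin F {M})ˣ :=
      (Nat.card_congr (MonoidHom.ofInjective hjinj).toEquiv).symm
    rw [h1, Nat.card_units, hcardA]
end

section
/- The number of monic irreducible polynomials of degree n over F_q times ∏_{i=1}^{n-1}(q^n − q^i) equals the number of matrices in M_n(F_q) whose characteristic polynomial is irreducible. -/
open Polynomial Matrix

section Aux

variable {F : Type*} [Field F] [Fintype F] {n : ℕ}

/-- If `aeval N f = 0` with `f` monic, the `natDegree`-th power of `N` applied to a vector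
is a combination of lower powers. -/
lemma aux_sum_mulVec {ι : Type*} (s : Finset ι) (A : ι → Matrix (Fin n) (Fin n) F)
    (w : Fin n → F) : (∑ i ∈ s, A i) *ᵥ w = ∑ i ∈ s, (A i) *ᵥ w := by
  induction s using Finset.cons_induction with
  | empty => simp [Matrix.zero_mulVec]
  | cons i s hi ih => simp [Matrix.add_mulVec, ih]

lemma aux_pow_mulVec {f : F[X]} (hm : f.Monic) {N : Matrix (Fin n) (Fin n) F}
    (hN : Polynomial.aeval N f = 0) (w : Fin n → F) :
    (N ^ f.natDegree) *ᵥ w =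
      ∑ j ∈ Finset.range f.natDegree, (-(f.coeff j)) • ((N ^ j) *ᵥ w) := by
  have h := hm.as_sum
  have h2 : (Polynomial.aeval N) f =
      N ^ f.natDegree + ∑ j ∈ Finset.range f.natDegree, f.coeff j • N ^ j := by
    conv_lhs => rw [h]
    simp [Algebra.smul_def]
  rw [h2] at hN
  have h3 : N ^ f.natDegree = -∑ j ∈ Finset.range f.natDegree, f.coeff j • N ^ j :=
    eq_neg_of_add_eq_zero_left hN
  rw [h3, Matrix.neg_mulVec, aux_sum_mulVec, neg_eq_iff_eq_neg, ← Finset.sum_neg_distrib]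
  refine Finset.sum_congr rfl fun j _ => ?_
  rw [Matrix.smul_mulVec, neg_smul, neg_neg]

lemma aux_linIndep {f : F[X]} (hf : Irreducible f) (hd : f.natDegree = n)
    {M : Matrix (Fin n) (Fin n) F} (hM : M.charpoly = f)
    {v : Fin n → F} (hv : v ≠ 0) :
    LinearIndependent F (fun i : Fin n => (M ^ (i : ℕ)) *ᵥ v) := by
  have hCH : Polynomial.aeval M f = 0 := by rw [← hM]; exact Matrix.aeval_self_charpoly M
  rw [Fintype.linearIndependent_iff]
  intro c hc i
  set p : F[X] := ∑ i : Fin n, Polynomial.C (c i) * Polynomial.X ^ (i : ℕ) with hp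
  have hdegp : p.natDegree < n ∨ p = 0 := by
    rcases eq_or_ne p 0 with h | h
    · exact Or.inr h
    · left
      rcases Nat.eq_zero_or_pos n with rfl | hn
      · exact absurd (by simp [hp]) h
      refine lt_of_le_of_lt (Polynomial.natDegree_sum_le _ _) ?_
      rw [Finset.fold_max_lt]
      refine ⟨hn, fun i _ => ?_⟩
      exact lt_of_le_of_lt (Polynomial.natDegree_C_mul_X_pow_le _ _) i.2
  have haev : (Polynomial.aeval M p) *ᵥ v = 0 := by
    rw [hp, map_sum, aux_sum_mulVec, ← hc]
    refine Finset.sum_congr rfl fun j _ => ?_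
    rw [_root_.map_mul, Polynomial.aeval_C, map_pow, Polynomial.aeval_X, Algebra.algebraMap_eq_smul_one,
      smul_mul_assoc, one_mul, Matrix.smul_mulVec]
  have hp0 : p = 0 := by
    by_contra hpne
    have hdegp' : p.natDegree < n := hdegp.resolve_right hpne
    have hnd : ¬ f ∣ p := by
      intro hdvd
      have := Polynomial.natDegree_le_of_dvd hdvd hpne
      omega
    obtain ⟨a, b, hab⟩ := hf.coprime_iff_not_dvd.mpr hnd
    apply hv
    calc v = (Polynomial.aeval M (a * f + b * p)) *ᵥ v := by rw [hab]; simp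
    _ = (Polynomial.aeval M a * Polynomial.aeval M f) *ᵥ v
        + (Polynomial.aeval M b) *ᵥ ((Polynomial.aeval M p) *ᵥ v) := by
        rw [map_add, Matrix.add_mulVec, _root_.map_mul, _root_.map_mul, Matrix.mulVec_mulVec]
    _ = 0 := by rw [hCH, mul_zero, Matrix.zero_mulVec, haev, Matrix.mulVec_zero, add_zero]
  -- extract coefficients
  have : p.coeff (i : ℕ) = c i := by
    rw [hp, Polynomial.finset_sum_coeff]
    rw [Finset.sum_eq_single i]
    · simp
    · intro j _ hji
      rw [Polynomial.coeff_C_mul, Polynomial.coeff_X_pow, if_neg (by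
        simpa [Fin.val_eq_val, eq_comm] using hji), mul_zero]
    · simp
  rw [hp0] at this
  simpa using this.symm

/-- There exists a matrix with prescribed monic irreducible charpoly of the right degree. -/
lemma aux_exists {f : F[X]} (hf : Irreducible f) (hm : f.Monic) (hd : f.natDegree = n) :
    ∃ M : Matrix (Fin n) (Fin n) F, M.charpoly = f := by
  haveI : Fact (Irreducible f) := ⟨hf⟩
  have hfne : f ≠ 0 := hm.ne_zero
  let pb := AdjoinRoot.powerBasis hfne
  have hdim : pb.dim = n := by rw [AdjoinRoot.powerBasis_dim, hd]
  let M0 := Algebra.leftMulMatrix pb.basis pb.gen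
  have hM0 : M0.charpoly = f := by
    rw [charpoly_leftMulMatrix, AdjoinRoot.powerBasis_gen, AdjoinRoot.minpoly_root hfne,
      hm.leadingCoeff, inv_one, Polynomial.C_1, mul_one]
  exact ⟨Matrix.reindex (finCongr hdim) (finCongr hdim) M0, by
    rw [Matrix.charpoly_reindex, hM0]⟩

end Aux

section Count

variable {F : Type*} [Field F] [Fintype F] {n : ℕ}

/-- The basis given by powers of a matrix with irreducible charpoly applied to a nonzero
vector. -/
noncomputable def auxBasis {f : F[X]} (hf : Irreducible f) (hd : f.natDegree = n)
    {M : Matrix (Fin n) (Fin n) F} (hM : M.charpoly = f)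
    {v : Fin n → F} (hv : v ≠ 0) (hn : 0 < n) : Module.Basis (Fin n) F (Fin n → F) :=
  haveI : Nonempty (Fin n) := ⟨⟨0, hn⟩⟩
  basisOfLinearIndependentOfCardEqFinrank (aux_linIndep hf hd hM hv)
    (by simp [Module.finrank_fintype_fun_eq_card])

lemma coe_auxBasis {f : F[X]} (hf : Irreducible f) (hd : f.natDegree = n)
    {M : Matrix (Fin n) (Fin n) F} (hM : M.charpoly = f)
    {v : Fin n → F} (hv : v ≠ 0) (hn : 0 < n) :
    ⇑(auxBasis hf hd hM hv hn) = fun i : Fin n => (M ^ (i : ℕ)) *ᵥ v := by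
  haveI : Nonempty (Fin n) := ⟨⟨0, hn⟩⟩
  exact coe_basisOfLinearIndependentOfCardEqFinrank _ _

lemma aux_charpoly_conj_s19 {A B Mx : Matrix (Fin n) (Fin n) F} (hAB : A * B = 1) :
    (A * Mx * B).charpoly = Mx.charpoly := by
  have hmap : ((Polynomial.C : F →+* F[X]).mapMatrix A) * ((Polynomial.C : F →+* F[X]).mapMatrix B)
      = 1 := by
    rw [← _root_.map_mul, hAB, _root_.map_one]
  have h1 : Matrix.charmatrix (A * Mx * B) =
      ((Polynomial.C : F →+* F[X]).mapMatrix A) * Matrix.charmatrix Mx *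
        ((Polynomial.C : F →+* F[X]).mapMatrix B) := by
    rw [Matrix.charmatrix, Matrix.charmatrix, mul_sub, sub_mul]
    congr 1
    · rw [mul_assoc, (Matrix.scalar_commute (Polynomial.X : F[X])
        (fun r => Commute.all _ r) _).eq, ← mul_assoc, hmap, one_mul]
    · rw [← _root_.map_mul, ← _root_.map_mul]
  rw [Matrix.charpoly, Matrix.charpoly, h1, Matrix.det_mul, Matrix.det_mul]
  calc ((Polynomial.C : F →+* F[X]).mapMatrix A).det * (Matrix.charmatrix Mx).det *
      ((Polynomial.C : F →+* F[X]).mapMatrix B).det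
      = (Matrix.charmatrix Mx).det * (((Polynomial.C : F →+* F[X]).mapMatrix A).det *
        ((Polynomial.C : F →+* F[X]).mapMatrix B).det) := by ring
    _ = (Matrix.charmatrix Mx).det := by rw [← Matrix.det_mul, hmap, Matrix.det_one, mul_one]

lemma aux_card_GL_eq {f : F[X]} (hf : Irreducible f) (hm : f.Monic) (hd : f.natDegree = n)
    (hn : 0 < n) :
    Nat.card (GL (Fin n) F) =
      Nat.card ({M : Matrix (Fin n) (Fin n) F // M.charpoly = f} ×
        {v : Fin n → F // v ≠ 0}) := by
  classical
  obtain ⟨M₀, hM₀⟩ := aux_exists hf hm hd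
  haveI : Nonempty (Fin n) := ⟨⟨0, hn⟩⟩
  set v₀ : Fin n → F := fun _ => 1 with hv₀def
  have hv₀ : v₀ ≠ 0 := by
    intro h
    have := congrFun h ⟨0, hn⟩
    simp [hv₀def] at this
  have hCH₀ : Polynomial.aeval M₀ f = 0 := by rw [← hM₀]; exact Matrix.aeval_self_charpoly M₀
  have hconj : ∀ P : GL (Fin n) F,
      ((P : Matrix (Fin n) (Fin n) F) * M₀ * ((P⁻¹ : GL (Fin n) F) : Matrix (Fin n) (Fin n) F)).charpoly = f := by
    intro P
    rw [aux_charpoly_conj_s19 (by rw [← Units.val_mul, mul_inv_cancel, Units.val_one]), hM₀]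
  have hne : ∀ P : GL (Fin n) F, (P : Matrix (Fin n) (Fin n) F) *ᵥ v₀ ≠ 0 := by
    intro P h
    apply hv₀
    have : ((P⁻¹ : GL (Fin n) F) : Matrix (Fin n) (Fin n) F) *ᵥ ((P : Matrix (Fin n) (Fin n) F) *ᵥ v₀) = v₀ := by
      rw [Matrix.mulVec_mulVec, ← Units.val_mul, inv_mul_cancel, Units.val_one, Matrix.one_mulVec]
    rw [h, Matrix.mulVec_zero] at this
    exact this.symm
  let Φ : GL (Fin n) F →
      {M : Matrix (Fin n) (Fin n) F // M.charpoly = f} × {v : Fin n → F // v ≠ 0} :=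
    fun P => (⟨(P : Matrix (Fin n) (Fin n) F) * M₀ * ((P⁻¹ : GL (Fin n) F) : Matrix (Fin n) (Fin n) F),
        hconj P⟩, ⟨(P : Matrix (Fin n) (Fin n) F) *ᵥ v₀, hne P⟩)
  refine Nat.card_eq_of_bijective Φ ⟨?_, ?_⟩
  · -- injective
    intro P P' h
    have h1 : (P : Matrix (Fin n) (Fin n) F) * M₀ * ((P⁻¹ : GL (Fin n) F) : Matrix (Fin n) (Fin n) F)
        = (P' : Matrix (Fin n) (Fin n) F) * M₀ * ((P'⁻¹ : GL (Fin n) F) : Matrix (Fin n) (Fin n) F) :=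
      congrArg (fun x => (Prod.fst x).val) h
    have h2 : (P : Matrix (Fin n) (Fin n) F) *ᵥ v₀ = (P' : Matrix (Fin n) (Fin n) F) *ᵥ v₀ :=
      congrArg (fun x => (Prod.snd x).val) h
    set Q : Matrix (Fin n) (Fin n) F :=
      ((P'⁻¹ : GL (Fin n) F) : Matrix (Fin n) (Fin n) F) * (P : Matrix (Fin n) (Fin n) F) with hQdef
    have hQcomm : Commute Q M₀ := by
      have h3 : (P : Matrix (Fin n) (Fin n) F) * M₀ =
          (P' : Matrix (Fin n) (Fin n) F) * M₀ * ((P'⁻¹ : GL (Fin n) F) : Matrix (Fin n) (Fin n) F) * (P : Matrix (Fin n) (Fin n) F) := by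
        rw [← h1, Units.inv_mul_cancel_right]
      show Q * M₀ = M₀ * Q
      rw [hQdef, mul_assoc, h3]
      simp only [mul_assoc, Units.inv_mul_cancel_left]
    have hQv : Q *ᵥ v₀ = v₀ := by
      rw [hQdef, ← Matrix.mulVec_mulVec, h2, Matrix.mulVec_mulVec, Units.inv_mul, Matrix.one_mulVec]
    have hQ1 : Q = 1 := by
      apply Matrix.toLin'.injective
      refine Module.Basis.ext (auxBasis hf hd hM₀ hv₀ hn) fun i => ?_
      rw [coe_auxBasis, Matrix.toLin'_apply, Matrix.mulVec_mulVec, (hQcomm.pow_right (i : ℕ)).eq,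
        ← Matrix.mulVec_mulVec, hQv]
      simp [Matrix.toLin'_apply, Matrix.one_mulVec]
    have h5 : (P' : Matrix (Fin n) (Fin n) F) * Q = (P : Matrix (Fin n) (Fin n) F) := by
      rw [hQdef, Units.mul_inv_cancel_left]
    rw [hQ1, mul_one] at h5
    exact Units.ext h5.symm
  · -- surjective
    rintro ⟨⟨M, hM⟩, ⟨v, hv⟩⟩
    have hCH : Polynomial.aeval M f = 0 := by rw [← hM]; exact Matrix.aeval_self_charpoly M
    set b₀ := auxBasis hf hd hM₀ hv₀ hn with hb₀
    set b := auxBasis hf hd hM hv hn with hb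
    set g := b₀.equiv b (Equiv.refl _) with hg
    have hgb : ∀ i : Fin n, g ((M₀ ^ (i : ℕ)) *ᵥ v₀) = (M ^ (i : ℕ)) *ᵥ v := by
      intro i
      have e1 : (M₀ ^ (i : ℕ)) *ᵥ v₀ = b₀ i := by rw [hb₀, coe_auxBasis]
      rw [e1, hg, Module.Basis.equiv_apply, Equiv.refl_apply, hb, coe_auxBasis]
    have key : ∀ k : ℕ, k ≤ n → g ((M₀ ^ k) *ᵥ v₀) = (M ^ k) *ᵥ v := by
      intro k hk
      rcases lt_or_eq_of_le hk with hlt | rfl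
      · exact hgb ⟨k, hlt⟩
      · have e₀ := aux_pow_mulVec hm hCH₀ v₀
        have e₁ := aux_pow_mulVec hm hCH v
        rw [hd] at e₀ e₁
        rw [e₀, e₁, map_sum]
        refine Finset.sum_congr rfl fun j hj => ?_
        rw [_root_.map_smul, hgb ⟨j, Finset.mem_range.mp hj⟩]
    -- build the GL element from g
    set A : Matrix (Fin n) (Fin n) F := LinearMap.toMatrix' (g : (Fin n → F) →ₗ[F] (Fin n → F)) with hA
    set B : Matrix (Fin n) (Fin n) F := LinearMap.toMatrix' (g.symm : (Fin n → F) →ₗ[F] (Fin n → F)) with hB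
    have hAB : A * B = 1 := by
      rw [hA, hB, ← LinearMap.toMatrix'_comp]
      have : (g : (Fin n → F) →ₗ[F] (Fin n → F)) ∘ₗ (g.symm : (Fin n → F) →ₗ[F] (Fin n → F)) = LinearMap.id := by
        ext x; simp
      rw [this, LinearMap.toMatrix'_id]
    have hBA : B * A = 1 := by
      rw [hB, hA, ← LinearMap.toMatrix'_comp]
      have : (g.symm : (Fin n → F) →ₗ[F] (Fin n → F)) ∘ₗ (g : (Fin n → F) →ₗ[F] (Fin n → F)) = LinearMap.id := by
        ext x; simp
      rw [this, LinearMap.toMatrix'_id]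
    set P : GL (Fin n) F := ⟨A, B, hAB, hBA⟩ with hP
    have hAapp : ∀ x : Fin n → F, A *ᵥ x = g x := by
      intro x
      rw [hA, ← Matrix.toLin'_apply, Matrix.toLin'_toMatrix']
      rfl
    have hPinv : ((P⁻¹ : GL (Fin n) F) : Matrix (Fin n) (Fin n) F) = B := rfl
    refine ⟨P, ?_⟩
    have hcomm : A * M₀ = M * A := by
      apply Matrix.toLin'.injective
      refine Module.Basis.ext b₀ fun i => ?_
      rw [Matrix.toLin'_mul, Matrix.toLin'_mul]
      have e1 : b₀ i = (M₀ ^ (i : ℕ)) *ᵥ v₀ := by rw [hb₀, coe_auxBasis]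
      simp only [LinearMap.comp_apply, Matrix.toLin'_apply]
      rw [e1, hAapp, hAapp, Matrix.mulVec_mulVec, ← pow_succ', key ((i : ℕ) + 1) i.2,
        key (i : ℕ) (le_of_lt i.2), Matrix.mulVec_mulVec, ← pow_succ']
    have hfirst : (P : Matrix (Fin n) (Fin n) F) * M₀ * ((P⁻¹ : GL (Fin n) F) : Matrix (Fin n) (Fin n) F) = M := by
      show A * M₀ * B = M
      rw [hcomm, mul_assoc, hAB, mul_one]
    have hsecond : (P : Matrix (Fin n) (Fin n) F) *ᵥ v₀ = v := by
      show A *ᵥ v₀ = v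
      have h0 := key 0 (Nat.zero_le _)
      rw [pow_zero, Matrix.one_mulVec, pow_zero, Matrix.one_mulVec] at h0
      rw [hAapp]
      exact h0
    simp only [Φ, Prod.mk.injEq, Subtype.mk.injEq]
    exact ⟨hfirst, hsecond⟩

lemma aux_card_ne_zero : Nat.card {v : Fin n → F // v ≠ 0} = Fintype.card F ^ n - 1 := by
  classical
  rw [Nat.card_eq_fintype_card]
  have h1 : Fintype.card {v : Fin n → F // v = 0} = 1 := Fintype.card_subtype_eq (0 : Fin n → F)
  have h2 := Fintype.card_subtype_compl (fun v : Fin n → F => v = 0)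
  have h3 : Fintype.card (Fin n → F) = Fintype.card F ^ n := by
    simp [Fintype.card_fun]
  rw [h1, h3] at h2
  convert h2 using 2

lemma aux_fiber_card {f : F[X]} (hf : Irreducible f) (hm : f.Monic) (hd : f.natDegree = n)
    (hn : 0 < n) :
    Nat.card {M : Matrix (Fin n) (Fin n) F // M.charpoly = f} =
      ∏ i ∈ Finset.Ico 1 n, (Fintype.card F ^ n - Fintype.card F ^ i) := by
  classical
  set q := Fintype.card F with hq
  have h1 := aux_card_GL_eq hf hm hd hn
  have h2 := Matrix.card_GL_field (𝔽 := F) (n := n)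
  have hprod : Nat.card ({M : Matrix (Fin n) (Fin n) F // M.charpoly = f} ×
      {v : Fin n → F // v ≠ 0}) =
      Nat.card {M : Matrix (Fin n) (Fin n) F // M.charpoly = f} * (q ^ n - 1) := by
    rw [Nat.card_prod, aux_card_ne_zero]
  have hq1 : 1 < q := Fintype.one_lt_card
  have hpos : 0 < q ^ n - 1 := by
    have := Nat.one_lt_pow hn.ne' hq1
    omega
  have hsplit : ∏ i : Fin n, (q ^ n - q ^ (i : ℕ)) =
      (q ^ n - 1) * ∏ i ∈ Finset.Ico 1 n, (q ^ n - q ^ i) := by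
    have h4 := Fin.prod_univ_eq_prod_range (fun i => q ^ n - q ^ i) n
    rw [h4, Finset.range_eq_Ico, Finset.prod_eq_prod_Ico_succ_bot hn, pow_zero]
  rw [h1, hprod, hsplit] at h2
  exact Nat.eq_of_mul_eq_mul_left hpos (by rw [← h2, mul_comm])

lemma aux_finite_T :
    Finite {f : F[X] // f.Monic ∧ Irreducible f ∧ f.natDegree = n} := by
  have hinj : Function.Injective
      (fun f : {f : F[X] // f.Monic ∧ Irreducible f ∧ f.natDegree = n} =>
        (fun i : Fin (n + 1) => f.1.coeff (i : ℕ))) := by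
    rintro ⟨f, hf1, hf2, hf3⟩ ⟨g, hg1, hg2, hg3⟩ h
    refine Subtype.ext (Polynomial.ext fun j => ?_)
    rcases le_or_gt j n with hj | hj
    · simpa using congrFun h ⟨j, by omega⟩
    · rw [Polynomial.coeff_eq_zero_of_natDegree_lt (by omega : f.natDegree < j),
        Polynomial.coeff_eq_zero_of_natDegree_lt (by omega : g.natDegree < j)]
  exact Finite.of_injective _ hinj

end Count

theorem count_matrices_with_some_irreducible_charpoly
    (F : Type*) [Field F] [Fintype F] (q n : ℕ) (hq : Fintype.card F = q) :
    Nat.card {f : Polynomial F // f.Monic ∧ Irreducible f ∧ f.natDegree = n} *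
        ∏ i ∈ Finset.Ico 1 n, (q ^ n - q ^ i) =
      Nat.card {M : Matrix (Fin n) (Fin n) F // Irreducible M.charpoly} := by
  classical
  subst hq
  rcases Nat.eq_zero_or_pos n with rfl | hn
  · have hT : IsEmpty {f : Polynomial F // f.Monic ∧ Irreducible f ∧ f.natDegree = 0} := by
      constructor
      rintro ⟨f, hf1, hf2, hf3⟩
      exact not_irreducible_one (hf1.natDegree_eq_zero.mp hf3 ▸ hf2)
    have hM : IsEmpty {M : Matrix (Fin 0) (Fin 0) F // Irreducible M.charpoly} := by
      constructor
      rintro ⟨M, hM⟩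
      have : M.charpoly = 1 := by
        rw [Matrix.charpoly, Matrix.det_isEmpty]
      rw [this] at hM
      exact not_irreducible_one hM
    rw [Nat.card_of_isEmpty, Nat.card_of_isEmpty, zero_mul]
  · haveI hT : Finite {f : F[X] // f.Monic ∧ Irreducible f ∧ f.natDegree = n} := aux_finite_T
    haveI : Fintype {f : F[X] // f.Monic ∧ Irreducible f ∧ f.natDegree = n} := Fintype.ofFinite _
    -- the equivalence with the sigma type
    let e : {M : Matrix (Fin n) (Fin n) F // Irreducible M.charpoly} ≃
        Σ g : {f : F[X] // f.Monic ∧ Irreducible f ∧ f.natDegree = n},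
          {M : Matrix (Fin n) (Fin n) F // M.charpoly = g.1} :=
      { toFun := fun M => ⟨⟨M.1.charpoly, M.1.charpoly_monic, M.2, by simp⟩, M.1, rfl⟩
        invFun := fun x => ⟨x.2.1, by rw [x.2.2]; exact x.1.2.2.1⟩
        left_inv := fun M => rfl
        right_inv := fun x => Sigma.subtype_ext (Subtype.ext x.2.2) rfl }
    haveI : ∀ g : {f : F[X] // f.Monic ∧ Irreducible f ∧ f.natDegree = n},
        Fintype {M : Matrix (Fin n) (Fin n) F // M.charpoly = g.1} := fun g =>
      Fintype.ofFinite _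
    have hterm : ∀ g : {f : F[X] // f.Monic ∧ Irreducible f ∧ f.natDegree = n},
        Fintype.card {M : Matrix (Fin n) (Fin n) F // M.charpoly = g.1} =
          ∏ i ∈ Finset.Ico 1 n, (Fintype.card F ^ n - Fintype.card F ^ i) := fun g => by
      rw [← Nat.card_eq_fintype_card]
      exact aux_fiber_card g.2.2.1 g.2.1 g.2.2.2 hn
    have hs : Nat.card (Σ g : {f : F[X] // f.Monic ∧ Irreducible f ∧ f.natDegree = n},
          {M : Matrix (Fin n) (Fin n) F // M.charpoly = g.1}) =
        Nat.card {f : F[X] // f.Monic ∧ Irreducible f ∧ f.natDegree = n} *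
          ∏ i ∈ Finset.Ico 1 n, (Fintype.card F ^ n - Fintype.card F ^ i) := by
      rw [Nat.card_eq_fintype_card, Fintype.card_sigma,
        Finset.sum_congr rfl fun g _ => hterm g, Finset.sum_const, Finset.card_univ,
        Nat.card_eq_fintype_card, smul_eq_mul]
    rw [Nat.card_congr e, hs]
end
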